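/- arXiv:2605.11602 — 8 statements merged into one kernel-verified Lean document; each statement's English description precedes it below -/
import Mathlib

section
/- Let F : ℝ → ℝ be a continuous nondecreasing function, and let a₀ < b₀ be real numbers with F(a₀) = inf F and F(b₀) = sup F. Let s ∈ (a₀, b₀). If F is differentiable at s with derivative f(s) > 0, then there exists a constant L > 0 such that |F(s') − F(s)| ≥ L·|s' − s| for all s' ∈ [a₀, b₀]. -/
/-- Sub-Lipschitz property at a point of positive derivative for a continuous
nondecreasing function attaining its extremes at `a₀` and `b₀`. -/
theorem stmt_0 (F : ℝ → ℝ) (hF_cont : Continuous F) (hF_mono : Monotone F)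
    (a₀ b₀ : ℝ) (hab : a₀ < b₀)
    (hinf : ∀ t, F a₀ ≤ F t) (hsup : ∀ t, F t ≤ F b₀)
    (s : ℝ) (hs : s ∈ Set.Ioo a₀ b₀)
    (fs : ℝ) (hderiv : HasDerivAt F fs s) (hfs : 0 < fs) :
    ∃ L > 0, ∀ s' ∈ Set.Icc a₀ b₀, L * |s' - s| ≤ |F s' - F s| := by
  obtain ⟨hsa, hsb⟩ := hs
  -- local estimate from the derivative
  have hlo : (fun x => F x - F s - (x - s) * fs) =o[nhds s] fun x => x - s := by
    simpa [smul_eq_mul, mul_comm] using hderiv.isLittleO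
  have hev : ∀ᶠ x in nhds s, |F x - F s - (x - s) * fs| ≤ fs / 2 * |x - s| := by
    have := hlo.bound (by positivity : (0:ℝ) < fs / 2)
    simpa [Real.norm_eq_abs] using this
  rw [Metric.eventually_nhds_iff] at hev
  obtain ⟨δ₀, hδ₀, hball⟩ := hev
  have key : ∀ x : ℝ, |x - s| < δ₀ → fs / 2 * |x - s| ≤ |F x - F s| := by
    intro x hx
    have h := hball (by simpa [Real.dist_eq] using hx)
    have h2 : |(x - s) * fs| - |F x - F s| ≤ fs / 2 * |x - s| := by
      calc |(x - s) * fs| - |F x - F s| ≤ |F x - F s - (x - s) * fs| := by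
            rw [abs_sub_comm (F x - F s)]
            exact sub_le_iff_le_add.mpr (by
              have := abs_add_le ((x - s) * fs - (F x - F s)) (F x - F s)
              simpa using this)
        _ ≤ fs / 2 * |x - s| := h
    have h3 : |(x - s) * fs| = fs * |x - s| := by
      rw [abs_mul, abs_of_pos hfs, mul_comm]
    nlinarith [abs_nonneg (x - s)]
  set δ : ℝ := min (δ₀ / 2) (min (s - a₀) (b₀ - s)) with hδdef
  have hδpos : 0 < δ := by
    apply lt_min (by linarith) (lt_min (by linarith) (by linarith))
  have hδlt : δ < δ₀ := lt_of_le_of_lt (min_le_left _ _) (by linarith)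
  have hδa : a₀ ≤ s - δ := by
    have : δ ≤ s - a₀ := le_trans (min_le_right _ _) (min_le_left _ _)
    linarith
  have hδb : s + δ ≤ b₀ := by
    have : δ ≤ b₀ - s := le_trans (min_le_right _ _) (min_le_right _ _)
    linarith
  set c : ℝ := fs / 2 * δ with hcdef
  have hcpos : 0 < c := by positivity
  refine ⟨min (fs / 2) (c / (b₀ - a₀)), lt_min (by positivity) (div_pos hcpos (by linarith)), ?_⟩
  intro s' hs'
  obtain ⟨hs'a, hs'b⟩ := hs'
  have habs : |s' - s| ≤ b₀ - a₀ := by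
    rw [abs_le]; constructor <;> linarith
  rcases le_or_gt |s' - s| δ with hcase | hcase
  · -- near case
    have := key s' (lt_of_le_of_lt hcase hδlt)
    calc min (fs / 2) (c / (b₀ - a₀)) * |s' - s| ≤ fs / 2 * |s' - s| := by
          apply mul_le_mul_of_nonneg_right (min_le_left _ _) (abs_nonneg _)
      _ ≤ |F s' - F s| := this
  · -- far case
    have hLb : min (fs / 2) (c / (b₀ - a₀)) * |s' - s| ≤ c := by
      calc min (fs / 2) (c / (b₀ - a₀)) * |s' - s|
          ≤ c / (b₀ - a₀) * (b₀ - a₀) := by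
            apply mul_le_mul (min_le_right _ _) habs (abs_nonneg _)
            exact le_of_lt (div_pos hcpos (by linarith))
        _ = c := by
            rw [div_mul_cancel₀ _ (by linarith : b₀ - a₀ ≠ 0)]
    refine le_trans hLb ?_
    rcases lt_or_ge s s' with hlt | hle
    · -- s' to the right
      have h1 : s + δ ≤ s' := by
        have : |s' - s| = s' - s := abs_of_pos (by linarith)
        linarith [this ▸ hcase]
      have h2 : fs / 2 * δ ≤ |F (s + δ) - F s| := by
        have := key (s + δ) (by rw [show s + δ - s = δ by ring, abs_of_pos hδpos]; exact hδlt)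
        simpa [abs_of_pos hδpos] using this
      have h3 : F s ≤ F (s + δ) := hF_mono (by linarith)
      have h4 : F (s + δ) ≤ F s' := hF_mono h1
      rw [abs_of_nonneg (by linarith : (0:ℝ) ≤ F s' - F s)]
      rw [abs_of_nonneg (by linarith : (0:ℝ) ≤ F (s + δ) - F s)] at h2
      calc c = fs / 2 * δ := hcdef
        _ ≤ F (s + δ) - F s := h2
        _ ≤ F s' - F s := by linarith
    · -- s' to the left
      have hlt' : s' < s := by
        rcases lt_or_eq_of_le hle with h | h
        · exact h
        · exfalso; rw [h] at hcase; simp at hcase; linarith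
      have h1 : s' ≤ s - δ := by
        have : |s' - s| = s - s' := by rw [abs_sub_comm]; exact abs_of_pos (by linarith)
        linarith [this ▸ hcase]
      have h2 : fs / 2 * δ ≤ |F (s - δ) - F s| := by
        have := key (s - δ) (by rw [show s - δ - s = -δ by ring, abs_neg, abs_of_pos hδpos]; exact hδlt)
        simpa [abs_neg, abs_of_pos hδpos] using this
      have h3 : F (s - δ) ≤ F s := hF_mono (by linarith)
      have h4 : F s' ≤ F (s - δ) := hF_mono h1
      rw [abs_sub_comm, abs_of_nonneg (by linarith : (0:ℝ) ≤ F s - F s')]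
      rw [abs_sub_comm, abs_of_nonneg (by linarith : (0:ℝ) ≤ F s - F (s - δ))] at h2
      calc c = fs / 2 * δ := hcdef
        _ ≤ F s - F (s - δ) := h2
        _ ≤ F s - F s' := by linarith
end

section
/- Let (X,Y) be a random pair with conditional distribution of Y given X = x supported on [−M₁(x), M₂(x)] with conditional density f_x bounded below by L(x) > 0. Let Q_α(x) be the conditional (1−α)-quantile of Y given X = x, and let Q̂ be any measurable function with Q̂(x) ∈ [−M₁(x), M₂(x)] for all x. Define the pinball loss ℓ_{1−α}(s₁,s₂) = (1−α − 𝟙(s₂ ≥ s₁))(s₁ − s₂). Then for every x, E[ℓ_{1−α}(Y, Q̂(x)) − ℓ_{1−α}(Y, Q_α(x)) | X = x] ≥ (L(x)/2)·(Q̂(x) − Q_α(x))². -/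
open MeasureTheory

/-- The pinball (quantile) loss at level `1 - α`:
`ℓ_{1-α}(s₁, s₂) = (1 - α - 𝟙(s₂ ≥ s₁)) (s₁ - s₂)`. -/
noncomputable def pinball (α s₁ s₂ : ℝ) : ℝ :=
  ((1 - α) - (if s₂ ≥ s₁ then (1:ℝ) else 0)) * (s₁ - s₂)

open Set
open scoped ENNReal NNReal

lemma pinball_eq (α y c : ℝ) : pinball α y c = (1 - α) * (y - c) + max (c - y) 0 := by
  unfold pinball
  rcases le_or_gt y c with h | h
  · rw [if_pos h, max_eq_left (by linarith)]; ring
  · rw [if_neg (not_le.mpr h), max_eq_right (by linarith)]; ring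

lemma max_sub_decomp (a b y : ℝ) :
    max (a - y) 0 - max (b - y) 0 =
      Set.indicator (Set.Iic b) (fun _ => a - b) y +
      Set.indicator (Set.Ioc b a) (fun z => a - z) y +
      Set.indicator (Set.Ioc a b) (fun z => z - a) y := by
  simp only [Set.indicator_apply, Set.mem_Iic, Set.mem_Ioc]
  rcases le_total y a with m1 | m1 <;> rcases le_total y b with m2 | m2 <;>
    split_ifs <;>
    simp_all [max_eq_left, max_eq_right, sub_nonneg, sub_nonpos] <;> linarith

lemma integrable_density (F : ℝ → ℝ) (hFm : Measurable F) (hF0 : ∀ y, 0 ≤ F y)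
    (h1 : ∫⁻ y, ENNReal.ofReal (F y) = 1) : Integrable F volume := by
  refine ⟨hFm.aestronglyMeasurable, ?_⟩
  have h2 : ∀ y, ‖F y‖ₑ = ENNReal.ofReal (F y) := fun y =>
    Real.enorm_eq_ofReal (hF0 y)
  simp only [HasFiniteIntegral, h2, h1]
  exact ENNReal.one_lt_top

lemma integrable_mul_bound (F : ℝ → ℝ) (hFm : Measurable F) (hF0 : ∀ y, 0 ≤ F y)
    (hFi : Integrable F volume) (m M : ℝ) (hsupp : ∀ y ∉ Set.Icc m M, F y = 0)
    (g : ℝ → ℝ) (hg : Continuous g) (C : ℝ) (hC : ∀ y ∈ Set.Icc m M, |g y| ≤ C) :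
    Integrable g (volume.withDensity fun y => ENNReal.ofReal (F y)) := by
  rw [integrable_withDensity_iff hFm.ennreal_ofReal
    (Filter.Eventually.of_forall fun y => ENNReal.ofReal_lt_top)]
  have heq : (fun y => g y * (ENNReal.ofReal (F y)).toReal) = fun y => g y * F y :=
    funext fun y => by rw [ENNReal.toReal_ofReal (hF0 y)]
  rw [heq]
  refine Integrable.mono' (hFi.const_mul C)
    (hg.aestronglyMeasurable.mul hFm.aestronglyMeasurable)
    (Filter.Eventually.of_forall fun y => ?_)
  by_cases hy : y ∈ Set.Icc m M
  · rw [norm_mul, Real.norm_eq_abs, Real.norm_eq_abs, abs_of_nonneg (hF0 y)]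
    exact mul_le_mul_of_nonneg_right (hC y hy) (hF0 y)
  · simp [hsupp y hy]

lemma setIntegral_density_lower (F : ℝ → ℝ) (hFm : Measurable F) (hF0 : ∀ y, 0 ≤ F y)
    (hFi : Integrable F volume) (Lx u v : ℝ)
    (hlow : ∀ y ∈ Set.Ioc u v, Lx ≤ F y)
    (g : ℝ → ℝ) (hg : Continuous g) (hg0 : ∀ y ∈ Set.Ioc u v, 0 ≤ g y)
    (hgb : ∀ y ∈ Set.Ioc u v, g y ≤ v - u) :
    Lx * ∫ y in Set.Ioc u v, g y ≤
      ∫ y in Set.Ioc u v, g y ∂(volume.withDensity fun y => ENNReal.ofReal (F y)) := by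
  have hden : (fun y => ENNReal.ofReal (F y)) = fun y => ((F y).toNNReal : ℝ≥0∞) := rfl
  have hm : Measurable fun y => (F y).toNNReal := measurable_real_toNNReal.comp hFm
  rw [hden, setIntegral_withDensity_eq_setIntegral_smul hm g measurableSet_Ioc]
  have heq : ∀ y, (F y).toNNReal • g y = F y * g y := fun y => by
    simp [NNReal.smul_def, Real.coe_toNNReal _ (hF0 y)]
  have h2 : IntegrableOn (fun y => F y * g y) (Set.Ioc u v) volume := by
    refine Integrable.mono' ((hFi.integrableOn).const_mul (v - u))
      ((hFm.mul hg.measurable).aestronglyMeasurable.restrict) ?_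
    filter_upwards [ae_restrict_mem measurableSet_Ioc] with y hy
    rw [norm_mul, Real.norm_eq_abs, Real.norm_eq_abs, abs_of_nonneg (hF0 y),
      abs_of_nonneg (hg0 y hy), mul_comm (v - u)]
    exact mul_le_mul_of_nonneg_left (hgb y hy) (hF0 y)
  have h1 : IntegrableOn (fun y => Lx * g y) (Set.Ioc u v) volume :=
    ((continuous_const.mul hg).integrableOn_Ioc)
  calc Lx * ∫ y in Set.Ioc u v, g y = ∫ y in Set.Ioc u v, Lx * g y := by
        rw [MeasureTheory.integral_const_mul]
    _ ≤ ∫ y in Set.Ioc u v, F y * g y :=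
        setIntegral_mono_on h1 h2 measurableSet_Ioc fun y hy =>
          mul_le_mul_of_nonneg_right (hlow y hy) (hg0 y hy)
    _ = ∫ y in Set.Ioc u v, (F y).toNNReal • g y := by simp only [heq]

/-- Conditional pinball excess-risk lower bound: for each covariate value `x`, the
conditional excess pinball risk of `Qhat x` over the true conditional `(1-α)`-quantile
`Qα x` is at least `(L x / 2) (Qhat x - Qα x)²`. -/
theorem stmt_2 {𝒳 : Type*} (α : ℝ) (hα : α ∈ Set.Ioo (0:ℝ) 1)
    (M₁ M₂ L : 𝒳 → ℝ) (f : 𝒳 → ℝ → ℝ) (μ : 𝒳 → Measure ℝ)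
    (hf_meas : ∀ x, Measurable (f x)) (hf_nonneg : ∀ x y, 0 ≤ f x y)
    (hμ : ∀ x, μ x = volume.withDensity (fun y => ENNReal.ofReal (f x y)))
    (hprob : ∀ x, IsProbabilityMeasure (μ x))
    (hsupp : ∀ x, ∀ y, y ∉ Set.Icc (-(M₁ x)) (M₂ x) → f x y = 0)
    (hL : ∀ x, 0 < L x)
    (hlow : ∀ x, ∀ y ∈ Set.Icc (-(M₁ x)) (M₂ x), L x ≤ f x y)
    (Qα Qhat : 𝒳 → ℝ)
    (hQα_mem : ∀ x, Qα x ∈ Set.Icc (-(M₁ x)) (M₂ x))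
    (hQα_q : ∀ x, (μ x) (Set.Iic (Qα x)) = ENNReal.ofReal (1 - α))
    (hQhat_mem : ∀ x, Qhat x ∈ Set.Icc (-(M₁ x)) (M₂ x)) :
    ∀ x, (L x / 2) * (Qhat x - Qα x) ^ 2 ≤
      (∫ y, pinball α y (Qhat x) ∂(μ x)) - ∫ y, pinball α y (Qα x) ∂(μ x) := by

  intro x
  obtain ⟨hα0, hα1⟩ := hα
  have hτ : (0:ℝ) < 1 - α := by linarith
  haveI := hprob x
  set a := Qhat x with ha
  set b := Qα x with hb
  have hm_a := hQhat_mem x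
  have hm_b := hQα_mem x
  have hFm := hf_meas x
  have hF0 := hf_nonneg x
  have hone : ∫⁻ y, ENNReal.ofReal (f x y) = 1 := by
    have h := (hprob x).measure_univ
    rw [hμ x, withDensity_apply _ MeasurableSet.univ, Measure.restrict_univ] at h
    exact h
  have hFi : Integrable (f x) volume := integrable_density _ hFm hF0 hone
  -- integrability of pinball losses
  have hpb : ∀ c : ℝ, Integrable (fun y => pinball α y c) (μ x) := by
    intro c
    rw [hμ x]
    have hco : Continuous fun y => pinball α y c := by
      have h : (fun y => pinball α y c) = fun y => (1 - α) * (y - c) + max (c - y) 0 :=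
        funext fun y => pinball_eq α y c
      rw [h]
      exact (continuous_const.mul (continuous_id.sub continuous_const)).add
        ((continuous_const.sub continuous_id).max continuous_const)
    refine integrable_mul_bound (f x) hFm hF0 hFi _ _ (hsupp x) _ hco
      (2 * (|(-(M₁ x))| + |M₂ x| + |c|)) ?_
    intro y hy
    have h1 : |y| ≤ |(-(M₁ x))| + |M₂ x| := by
      rw [abs_le]
      constructor
      · have := neg_abs_le (-(M₁ x)); have := abs_nonneg (M₂ x); linarith [hy.1]
      · have := le_abs_self (M₂ x); have := abs_nonneg (-(M₁ x)); linarith [hy.2]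
    rw [pinball_eq]
    have h2 : |max (c - y) 0| ≤ |c - y| := by
      rw [abs_of_nonneg (le_max_right _ _)]
      exact max_le (le_abs_self _) (abs_nonneg _)
    have h3 : |(1 - α) * (y - c)| ≤ |y - c| := by
      rw [abs_mul, abs_of_nonneg hτ.le]
      nlinarith [abs_nonneg (y - c)]
    have h4 : |c - y| = |y - c| := abs_sub_comm c y
    have h5 : |y - c| ≤ |y| + |c| := abs_sub _ _
    calc |(1 - α) * (y - c) + max (c - y) 0|
        ≤ |(1 - α) * (y - c)| + |max (c - y) 0| := abs_add_le _ _
      _ ≤ 2 * (|(-(M₁ x))| + |M₂ x| + |c|) := by linarith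
  -- indicator integrabilities
  have i1 : Integrable (Set.indicator (Set.Iic b) fun _ => a - b) (μ x) :=
    (integrable_const (a - b)).indicator measurableSet_Iic
  have i2 : Integrable (Set.indicator (Set.Ioc b a) fun z => a - z) (μ x) := by
    refine Integrable.mono' (integrable_const |a - b|)
      (((continuous_const.sub continuous_id).aestronglyMeasurable).indicator measurableSet_Ioc)
      (Filter.Eventually.of_forall fun y => ?_)
    by_cases hy : y ∈ Set.Ioc b a
    · rw [Set.indicator_of_mem hy, Real.norm_eq_abs, abs_of_nonneg (by linarith [hy.2])]
      have : a - y ≤ a - b := by linarith [hy.1]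
      exact this.trans (le_abs_self _)
    · rw [Set.indicator_of_notMem hy]; simp [abs_nonneg]
  have i3 : Integrable (Set.indicator (Set.Ioc a b) fun z => z - a) (μ x) := by
    refine Integrable.mono' (integrable_const |a - b|)
      (((continuous_id.sub continuous_const).aestronglyMeasurable).indicator measurableSet_Ioc)
      (Filter.Eventually.of_forall fun y => ?_)
    by_cases hy : y ∈ Set.Ioc a b
    · rw [Set.indicator_of_mem hy, Real.norm_eq_abs, abs_of_nonneg (by linarith [hy.1])]
      have : y - a ≤ b - a := by linarith [hy.2]
      exact this.trans ((le_abs_self _).trans (le_of_eq (abs_sub_comm b a)))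
    · rw [Set.indicator_of_notMem hy]; simp [abs_nonneg]
  -- key identity
  have key : (∫ y, pinball α y a ∂(μ x)) - ∫ y, pinball α y b ∂(μ x)
      = (1 - α) * (b - a) + ((1 - α) * (a - b)
        + (∫ y in Set.Ioc b a, (a - y) ∂(μ x)) + ∫ y in Set.Ioc a b, (y - a) ∂(μ x)) := by
    rw [← integral_sub (hpb a) (hpb b)]
    have hptw : (fun y => pinball α y a - pinball α y b) = fun y =>
        (1 - α) * (b - a) + (Set.indicator (Set.Iic b) (fun _ => a - b) y +
          Set.indicator (Set.Ioc b a) (fun z => a - z) y +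
          Set.indicator (Set.Ioc a b) (fun z => z - a) y) := funext fun y => by
      rw [pinball_eq, pinball_eq, ← max_sub_decomp a b y]; ring
    rw [hptw]
    have i123 : Integrable (fun y => Set.indicator (Set.Iic b) (fun _ => a - b) y +
        Set.indicator (Set.Ioc b a) (fun z => a - z) y +
        Set.indicator (Set.Ioc a b) (fun z => z - a) y) (μ x) := (i1.add i2).add i3
    have i12 : Integrable (fun y => Set.indicator (Set.Iic b) (fun _ => a - b) y +
        Set.indicator (Set.Ioc b a) (fun z => a - z) y) (μ x) := i1.add i2
    rw [integral_add (integrable_const ((1 - α) * (b - a))) i123,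
      integral_add i12 i3, integral_add i1 i2,
      integral_indicator_const _ measurableSet_Iic,
      integral_indicator measurableSet_Ioc, integral_indicator measurableSet_Ioc,
      integral_const, measureReal_def, measureReal_def, hQα_q x, ENNReal.toReal_ofReal hτ.le]
    simp [measure_univ, smul_eq_mul, mul_comm]
  rw [key]
  rcases le_total b a with hab | hab
  · have hI3 : (∫ y in Set.Ioc a b, (y - a) ∂(μ x)) = 0 := by
      rw [Set.Ioc_eq_empty (not_lt.mpr hab), Measure.restrict_empty, integral_zero_measure]
    have hI2 : L x * ((a - b) ^ 2 / 2) ≤ ∫ y in Set.Ioc b a, (a - y) ∂(μ x) := by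
      have hcore := setIntegral_density_lower (f x) hFm hF0 hFi (L x) b a
        (fun y hy => hlow x y ⟨le_trans hm_b.1 hy.1.le, le_trans hy.2 hm_a.2⟩)
        (fun y => a - y) (continuous_const.sub continuous_id)
        (fun y hy => by show (0:ℝ) ≤ a - y; linarith [hy.2])
        (fun y hy => by show a - y ≤ a - b; linarith [hy.1])
      have hval : (∫ y in Set.Ioc b a, (a - y)) = (a - b) ^ 2 / 2 := by
        rw [← intervalIntegral.integral_of_le hab,
          intervalIntegral.integral_sub intervalIntegrable_const intervalIntegral.intervalIntegrable_id,
          integral_id, intervalIntegral.integral_const, smul_eq_mul]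
        ring
      rw [hμ x]
      calc L x * ((a - b) ^ 2 / 2) = L x * ∫ y in Set.Ioc b a, (a - y) := by rw [hval]
        _ ≤ _ := hcore
    nlinarith [hI2, hI3]
  · have hI2 : (∫ y in Set.Ioc b a, (a - y) ∂(μ x)) = 0 := by
      rw [Set.Ioc_eq_empty (not_lt.mpr hab), Measure.restrict_empty, integral_zero_measure]
    have hI3 : L x * ((b - a) ^ 2 / 2) ≤ ∫ y in Set.Ioc a b, (y - a) ∂(μ x) := by
      have hcore := setIntegral_density_lower (f x) hFm hF0 hFi (L x) a b
        (fun y hy => hlow x y ⟨le_trans hm_a.1 hy.1.le, le_trans hy.2 hm_b.2⟩)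
        (fun y => y - a) (continuous_id.sub continuous_const)
        (fun y hy => by show (0:ℝ) ≤ y - a; linarith [hy.1])
        (fun y hy => by show y - a ≤ b - a; linarith [hy.2])
      have hval : (∫ y in Set.Ioc a b, (y - a)) = (b - a) ^ 2 / 2 := by
        rw [← intervalIntegral.integral_of_le hab,
          intervalIntegral.integral_sub intervalIntegral.intervalIntegrable_id intervalIntegrable_const,
          integral_id, intervalIntegral.integral_const, smul_eq_mul]
        ring
      rw [hμ x]
      calc L x * ((b - a) ^ 2 / 2) = L x * ∫ y in Set.Ioc a b, (y - a) := by rw [hval]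
        _ ≤ _ := hcore
    nlinarith [hI2, hI3]
end

section
/- Let w₁,...,w_{n+1} be nonnegative reals with positive sum, and let s₁,...,s_{n+1} be reals. Define the weighted empirical distribution P = (Σᵢ wᵢ)^{-1} Σᵢ wᵢ δ_{sᵢ} and let q = Q(1−α; P) be its (1−α)-quantile. Then 1−α ≤ Σⱼ (wⱼ / Σᵢ wᵢ) 𝟙(sⱼ ≤ q) ≤ 1−α + ŵ_max, where ŵ_max = sup_c (Σᵢ wᵢ 𝟙(sᵢ = c)) / (Σᵢ wᵢ) is the largest atom of P. -/
/-- Deterministic weighted conformal calibration inequality: the weighted empirical CDF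
evaluated at its own `(1-α)`-quantile lies in `[1-α, 1-α + ŵ_max]`, where `ŵ_max` is
the largest atom of the weighted empirical distribution. -/
theorem stmt_6 (n : ℕ) (w s : Fin (n + 1) → ℝ) (α : ℝ)
    (hw : ∀ i, 0 ≤ w i) (hW : 0 < ∑ i, w i) (hα : α ∈ Set.Ioo (0:ℝ) 1)
    (Fhat : ℝ → ℝ)
    (hFhat : ∀ u, Fhat u = (∑ i, if s i ≤ u then w i else 0) / ∑ i, w i)
    (q : ℝ) (hq : q = sInf {u | 1 - α ≤ Fhat u})
    (wmax : ℝ)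
    (hwmax : wmax = sSup {v | ∃ c : ℝ, v = (∑ i, if s i = c then w i else 0) / ∑ i, w i}) :
    1 - α ≤ Fhat q ∧ Fhat q ≤ 1 - α + wmax := by
  obtain ⟨hα0, hα1⟩ := hα
  set S : Set ℝ := {u | 1 - α ≤ Fhat u} with hS
  have huniv : (Finset.univ : Finset (Fin (n+1))).Nonempty := Finset.univ_nonempty
  -- monotonicity
  have hmono : ∀ u v : ℝ, u ≤ v → Fhat u ≤ Fhat v := by
    intro u v huv
    rw [hFhat u, hFhat v]
    gcongr with i _
    split_ifs with h1 h2 h2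
    · exact le_rfl
    · exact absurd (h1.trans huv) h2
    · exact hw i
    · exact le_rfl
  -- S nonempty
  set M : ℝ := Finset.univ.sup' huniv s with hM
  have hMmem : M ∈ S := by
    have : Fhat M = 1 := by
      rw [hFhat]
      rw [Finset.sum_congr rfl (fun i _ => if_pos (Finset.le_sup' s (Finset.mem_univ i)))]
      exact div_self hW.ne'
    simp only [hS, Set.mem_setOf_eq, this]
    linarith
  have hSne : S.Nonempty := ⟨M, hMmem⟩
  -- S bounded below
  set m : ℝ := Finset.univ.inf' huniv s with hm
  have hbdd : BddBelow S := by
    refine ⟨m, fun u hu => ?_⟩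
    by_contra hlt
    push_neg at hlt
    have : Fhat u = 0 := by
      rw [hFhat]
      rw [Finset.sum_congr rfl (fun i _ => if_neg (by
        have := Finset.inf'_le s (Finset.mem_univ i)
        push_neg
        linarith))]
      simp
    simp only [hS, Set.mem_setOf_eq, this] at hu
    linarith
  have hqle : ∀ u ∈ S, q ≤ u := fun u hu => hq ▸ csInf_le hbdd hu
  -- Lower bound: Fhat q ≥ 1 - α
  have hlow : 1 - α ≤ Fhat q := by
    -- choose δ > 0 with no score in (q, q + δ)
    obtain ⟨δ, hδ0, hδ⟩ : ∃ δ > 0, ∀ i, q < s i → q + δ ≤ s i := by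
      by_cases hT : (Finset.univ.filter (fun i => q < s i)).Nonempty
      · refine ⟨(Finset.univ.filter (fun i => q < s i)).inf' hT (fun i => s i - q), ?_, ?_⟩
        · exact (Finset.lt_inf'_iff hT).mpr (fun i hi => by
            simp only [Finset.mem_filter] at hi; linarith [hi.2])
        · intro i hi
          have hmem : i ∈ Finset.univ.filter (fun j => q < s j) := by
            simp [hi]
          have := Finset.inf'_le (fun j => s j - q) hmem
          linarith
      · exact ⟨1, one_pos, fun i hi => absurd
          ⟨i, Finset.mem_filter.mpr ⟨Finset.mem_univ i, hi⟩⟩ hT⟩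
    obtain ⟨u, huS, hult⟩ : ∃ u ∈ S, u < q + δ := by
      by_contra h
      push_neg at h
      have : q + δ ≤ sInf S := le_csInf hSne h
      rw [← hq] at this
      linarith
    have hequ : Fhat q = Fhat u := by
      rw [hFhat, hFhat]
      congr 1
      apply Finset.sum_congr rfl
      intro i _
      congr 1
      refine propext ⟨fun h => h.trans (hqle u huS), fun h => ?_⟩
      by_contra hnq
      push_neg at hnq
      linarith [hδ i hnq]
    rw [hequ]
    exact huS
  refine ⟨hlow, ?_⟩
  -- Upper bound
  -- choose u < q with no score in (u, q)
  obtain ⟨u, hult, hu⟩ : ∃ u < q, ∀ i, s i < q → s i ≤ u := by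
    by_cases hT : (Finset.univ.filter (fun i => s i < q)).Nonempty
    · refine ⟨(Finset.univ.filter (fun i => s i < q)).sup' hT s, ?_, ?_⟩
      · rw [Finset.sup'_lt_iff]
        intro i hi
        exact (Finset.mem_filter.mp hi).2
      · intro i hi
        exact Finset.le_sup' s (Finset.mem_filter.mpr ⟨Finset.mem_univ i, hi⟩)
    · exact ⟨q - 1, by linarith, fun i hi => absurd
        ⟨i, Finset.mem_filter.mpr ⟨Finset.mem_univ i, hi⟩⟩ hT⟩
  have huNS : Fhat u < 1 - α := by
    by_contra h
    push_neg at h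
    exact absurd (hqle u h) (by linarith)
  have hsplit : Fhat q = Fhat u + (∑ i, if s i = q then w i else 0) / ∑ i, w i := by
    rw [hFhat, hFhat, ← add_div]
    congr 1
    rw [← Finset.sum_add_distrib]
    apply Finset.sum_congr rfl
    intro i _
    rcases lt_trichotomy (s i) q with h | h | h
    · rw [if_pos h.le, if_pos (hu i h), if_neg h.ne, add_zero]
    · rw [if_pos h.le, if_neg (by linarith), if_pos h, zero_add]
    · rw [if_neg (not_le.mpr h), if_neg (by push_neg; linarith), if_neg h.ne', add_zero]
  have hatom : (∑ i, if s i = q then w i else 0) / ∑ i, w i ≤ wmax := by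
    rw [hwmax]
    apply le_csSup
    · refine ⟨1, fun v hv => ?_⟩
      obtain ⟨c, rfl⟩ := hv
      rw [div_le_one hW]
      apply Finset.sum_le_sum
      intro i _
      split_ifs
      · exact le_rfl
      · exact hw i
    · exact ⟨q, rfl⟩
  linarith [hsplit, hatom, huNS]
end

section
/- Let X be supported on [0,1]^d with density bounded in [L₁, L̄₁] for 0 < L₁ ≤ L̄₁ < ∞. Let K(x₁,x₂;h) = K₀(‖x₁−x₂‖₂/h) where K₀ : [0,∞) → [0,∞) is bounded, nonincreasing, u·K₀(u) is nonincreasing for u > 1, and ∫₀^∞ u^d K₀(u) du < ∞. Then for every ℓ ≥ 1 there exist constants 0 < L₂ ≤ L̄₂ < ∞ (depending on d, ℓ, K₀, L₁, L̄₁) such that L₂ ≤ h^{-d} E[(K(X, x₀; h))^ℓ] ≤ L̄₂ for all x₀ ∈ [0,1]^d and all h ∈ (0,1]. -/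
open MeasureTheory Measure Set Metric Module
open scoped ENNReal NNReal

lemma aux_lintegral_norm {E : Type*} [NormedAddCommGroup E] [NormedSpace ℝ E]
    [Nontrivial E] [FiniteDimensional ℝ E] [MeasurableSpace E] [BorelSpace E]
    (μ : Measure E) [μ.IsAddHaarMeasure] (g : ℝ → ℝ≥0∞) (hg : Measurable g) :
    ∫⁻ x, g ‖x‖ ∂μ = μ.toSphere Set.univ *
      ∫⁻ y in Set.Ioi (0:ℝ), ENNReal.ofReal (y ^ (finrank ℝ E - 1)) * g y := by
  have hgs : Measurable fun p : sphere (0:E) 1 × Set.Ioi (0:ℝ) => g p.2 :=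
    hg.comp (measurable_subtype_coe.comp measurable_snd)
  calc ∫⁻ x, g ‖x‖ ∂μ
      = ∫⁻ x : ({0}ᶜ : Set E), g ‖(x : E)‖ ∂(μ.comap Subtype.val) := by
        rw [lintegral_subtype_comap (measurableSet_singleton (0:E)).compl
          (fun a => g ‖a‖), restrict_compl_singleton]
    _ = ∫⁻ p : sphere (0:E) 1 × Set.Ioi (0:ℝ), g p.2
          ∂(μ.toSphere.prod (volumeIoiPow (finrank ℝ E - 1))) :=
        (lintegral_congr fun x => by
          simp [homeomorphUnitSphereProd, homeomorphSphereProd]).trans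
          (μ.measurePreserving_homeomorphUnitSphereProd.lintegral_comp hgs)
    _ = μ.toSphere Set.univ * ∫⁻ y : Set.Ioi (0:ℝ), g y ∂(volumeIoiPow (finrank ℝ E - 1)) := by
        rw [lintegral_prod (fun p : sphere (0:E) 1 × Set.Ioi (0:ℝ) => g p.2) hgs.aemeasurable]
        simp only [lintegral_const]
        rw [mul_comm]
    _ = μ.toSphere Set.univ *
          ∫⁻ y in Set.Ioi (0:ℝ), ENNReal.ofReal (y ^ (finrank ℝ E - 1)) * g y := by
        congr 1
        rw [Measure.volumeIoiPow,
          lintegral_withDensity_eq_lintegral_mul _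
            (f := fun r : Set.Ioi (0:ℝ) => ENNReal.ofReal (r.1 ^ (finrank ℝ E - 1)))
            ((measurable_subtype_coe.pow_const _).ennreal_ofReal)
            (g := fun r : Set.Ioi (0:ℝ) => g r.1) (hg.comp measurable_subtype_coe)]
        exact lintegral_subtype_comap measurableSet_Ioi
          (fun y => ENNReal.ofReal (y ^ (finrank ℝ E - 1)) * g y)

lemma aux_integrable_norm {E : Type*} [NormedAddCommGroup E] [NormedSpace ℝ E]
    [Nontrivial E] [FiniteDimensional ℝ E] [MeasurableSpace E] [BorelSpace E]
    (μ : Measure E) [μ.IsAddHaarMeasure] {g : ℝ → ℝ} (hg : Measurable g)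
    (hg0 : ∀ u, 0 ≤ g u)
    (hint : IntegrableOn (fun y => y ^ (finrank ℝ E - 1) * g y) (Set.Ioi 0)) :
    Integrable (fun x : E => g ‖x‖) μ := by
  refine ⟨(hg.comp measurable_norm).aestronglyMeasurable, ?_⟩
  have h1 : (∫⁻ x, ‖g ‖x‖‖ₑ ∂μ) = ∫⁻ x, ENNReal.ofReal (g ‖x‖) ∂μ :=
    lintegral_enorm_of_nonneg fun x => hg0 _
  rw [HasFiniteIntegral, h1, aux_lintegral_norm μ _ hg.ennreal_ofReal]
  refine ENNReal.mul_lt_top (measure_lt_top _ _) ?_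
  have h2 : ∀ y ∈ Set.Ioi (0:ℝ),
      ENNReal.ofReal (y ^ (finrank ℝ E - 1)) * ENNReal.ofReal (g y)
        = ENNReal.ofReal (y ^ (finrank ℝ E - 1) * g y) := by
    intro y hy
    rw [← ENNReal.ofReal_mul (pow_nonneg (le_of_lt hy) _)]
  rw [setLIntegral_congr_fun measurableSet_Ioi h2]
  exact hint.setLIntegral_lt_top

set_option maxHeartbeats 2000000 in
/-- Kernel moment bounds: if `X` has density in `[L₁, L₁']` on `[0,1]^d` and the
radial kernel profile `K₀` is bounded, nonincreasing, with `u K₀ u` nonincreasing for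
`u > 1` and `∫ u^d K₀ u du < ∞`, then for every `ℓ ≥ 1` the rescaled moment
`h^{-d} E[(K₀(‖X - x₀‖/h))^ℓ]` is bounded above and below by positive constants,
uniformly in `x₀ ∈ [0,1]^d` and `h ∈ (0,1]`. -/
theorem stmt_11 (d : ℕ) (L₁ L₁' : ℝ) (hL₁ : 0 < L₁) (hL₁' : L₁ ≤ L₁')
    (fX : EuclideanSpace ℝ (Fin d) → ℝ) (hfX_meas : Measurable fX)
    (cube : Set (EuclideanSpace ℝ (Fin d)))
    (hcube : cube = {x | ∀ i, x i ∈ Set.Icc (0:ℝ) 1})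
    (hsupp : ∀ x ∉ cube, fX x = 0)
    (hlow : ∀ x ∈ cube, L₁ ≤ fX x) (hup : ∀ x ∈ cube, fX x ≤ L₁')
    (μ : Measure (EuclideanSpace ℝ (Fin d)))
    (hμ : μ = volume.withDensity fun x => ENNReal.ofReal (fX x))
    (hprob : IsProbabilityMeasure μ)
    (K₀ : ℝ → ℝ) (C : ℝ)
    (hK₀_nonneg : ∀ u, 0 ≤ K₀ u) (hK₀_bdd : ∀ u, K₀ u ≤ C)
    (hK₀_anti : AntitoneOn K₀ (Set.Ici 0))
    (hK₀_tail : AntitoneOn (fun u => u * K₀ u) (Set.Ioi 1))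
    (hK₀_int : IntegrableOn (fun u => u ^ d * K₀ u) (Set.Ioi (0:ℝ)))
    (hK₀_one : 0 < K₀ 1) :
    ∀ ℓ : ℝ, 1 ≤ ℓ → ∃ L₂ L₂' : ℝ, 0 < L₂ ∧ L₂ ≤ L₂' ∧
      ∀ x₀ ∈ cube, ∀ h ∈ Set.Ioc (0:ℝ) 1,
        L₂ ≤ (∫ x, (K₀ (dist x x₀ / h)) ^ ℓ ∂μ) / h ^ d ∧
        (∫ x, (K₀ (dist x x₀ / h)) ^ ℓ ∂μ) / h ^ d ≤ L₂' := by
  intro ℓ hℓ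
  have hℓ0 : (0:ℝ) < ℓ := lt_of_lt_of_le one_pos hℓ
  have hC0 : 0 ≤ C := le_trans (hK₀_nonneg 0) (hK₀_bdd 0)
  -- a globally antitone modification of K₀
  set K₁ : ℝ → ℝ := fun u => K₀ (max u 0) with hK₁_def
  have hK₁_anti : Antitone K₁ := fun u v huv =>
    hK₀_anti (le_max_right u 0) (le_max_right v 0) (max_le_max huv le_rfl)
  have hK₁_meas : Measurable K₁ := hK₁_anti.measurable
  have hK₁_eq : ∀ u : ℝ, 0 ≤ u → K₁ u = K₀ u := fun u hu => by
    simp [hK₁_def, max_eq_left hu]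
  have hK₁_nonneg : ∀ u, 0 ≤ K₁ u := fun u => hK₀_nonneg _
  have hK₁_bdd : ∀ u, K₁ u ≤ C := fun u => hK₀_bdd _
  have hfX0 : ∀ x, 0 ≤ fX x := by
    intro x
    by_cases hx : x ∈ cube
    · exact le_trans hL₁.le (hlow x hx)
    · rw [hsupp x hx]
  have h_rpow_le : ∀ a : ℝ, 0 ≤ a → a ≤ C → a ^ ℓ ≤ C ^ (ℓ - 1) * a := by
    intro a ha haC
    rcases eq_or_lt_of_le ha with rfl | ha'
    · rw [Real.zero_rpow (by linarith), mul_zero]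
    · have heq : a ^ ℓ = a ^ (ℓ - 1) * a ^ (1:ℝ) := by
        rw [← Real.rpow_add ha']; norm_num
      rw [heq, Real.rpow_one]
      exact mul_le_mul_of_nonneg_right
        (Real.rpow_le_rpow ha haC (by linarith)) ha
  -- measurability of the integrand family
  have hKmeas : ∀ (x₀ : EuclideanSpace ℝ (Fin d)) (h : ℝ),
      Measurable fun x => fX x * K₁ (dist x x₀ / h) ^ ℓ := by
    intro x₀ h
    have h1 : Measurable fun t : ℝ => t ^ ℓ :=
      (Real.continuous_rpow_const (le_of_lt hℓ0)).measurable
    exact hfX_meas.mul (h1.comp (hK₁_meas.comp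
      (((continuous_id.dist continuous_const).measurable).div_const h)))
  -- rewrite the μ-integral as a volume integral
  have hI_eq : ∀ (x₀ : EuclideanSpace ℝ (Fin d)) (h : ℝ), 0 < h →
      (∫ x, (K₀ (dist x x₀ / h)) ^ ℓ ∂μ)
        = ∫ x, fX x * K₁ (dist x x₀ / h) ^ ℓ := by
    intro x₀ h hh
    rw [hμ]
    rw [show (fun x => ENNReal.ofReal (fX x))
        = fun x => (((fun x => (fX x).toNNReal) x : ℝ≥0) : ℝ≥0∞) from rfl]
    rw [integral_withDensity_eq_integral_smul hfX_meas.real_toNNReal]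
    congr 1
    funext x
    rw [NNReal.smul_def, Real.coe_toNNReal _ (hfX0 x), smul_eq_mul,
      hK₁_eq _ (div_nonneg dist_nonneg hh.le)]
  rcases Nat.eq_zero_or_pos d with hd0 | hd
  · -- degenerate case `d = 0`
    subst hd0
    haveI hss : Subsingleton (EuclideanSpace ℝ (Fin 0)) :=
      ⟨fun a b => by ext i; exact i.elim0⟩
    have hK10 : K₀ 1 ≤ K₀ 0 :=
      hK₀_anti (Set.self_mem_Ici) (Set.mem_Ici.mpr zero_le_one) zero_le_one
    refine ⟨K₀ 1 ^ ℓ, K₀ 0 ^ ℓ, Real.rpow_pos_of_pos hK₀_one ℓ,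
      Real.rpow_le_rpow (hK₀_nonneg 1) hK10 (le_of_lt hℓ0), ?_⟩
    intro x₀ _ h hh
    have hdist : ∀ x : EuclideanSpace ℝ (Fin 0), dist x x₀ = 0 := fun x => by
      rw [Subsingleton.elim x x₀, dist_self]
    have hval : (∫ x, (K₀ (dist x x₀ / h)) ^ ℓ ∂μ) = K₀ 0 ^ ℓ := by
      have hfun : (fun x : EuclideanSpace ℝ (Fin 0) => (K₀ (dist x x₀ / h)) ^ ℓ)
          = fun _ => K₀ 0 ^ ℓ := funext fun x => by rw [hdist x, zero_div]
      rw [hfun, integral_const]; simp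
    rw [hval, pow_zero, div_one]
    exact ⟨Real.rpow_le_rpow (hK₀_nonneg 1) hK10 (le_of_lt hℓ0), le_refl _⟩
  · -- main case `d ≥ 1`
    haveI : Nonempty (Fin d) := Fin.pos_iff_nonempty.mp hd
    have hfr : finrank ℝ (EuclideanSpace ℝ (Fin d)) = d := finrank_euclideanSpace_fin
    have hrpow_meas : Measurable fun t : ℝ => t ^ ℓ :=
      (Real.continuous_rpow_const (le_of_lt hℓ0)).measurable
    have hg0_meas : Measurable fun u : ℝ => K₁ u ^ ℓ := hrpow_meas.comp hK₁_meas
    have hg0_nonneg : ∀ u : ℝ, 0 ≤ K₁ u ^ ℓ := fun u => Real.rpow_nonneg (hK₁_nonneg u) ℓ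
    have hint_radial : IntegrableOn (fun y : ℝ => y ^ (d - 1) * K₁ y ^ ℓ) (Set.Ioi 0) := by
      have hmeas : Measurable fun y : ℝ => y ^ (d - 1) * K₁ y ^ ℓ :=
        (measurable_id.pow_const (d-1)).mul hg0_meas
      have hsplit : Set.Ioi (0:ℝ) = Set.Ioc 0 1 ∪ Set.Ioi 1 :=
        (Set.Ioc_union_Ioi_eq_Ioi zero_le_one).symm
      rw [hsplit]
      refine IntegrableOn.union ?_ ?_
      · refine Integrable.mono'
          ((integrableOn_const (by rw [Real.volume_Ioc]; exact ENNReal.ofReal_ne_top) :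
            IntegrableOn (fun _ : ℝ => C ^ (ℓ - 1) * C) (Set.Ioc 0 1) volume))
          hmeas.aestronglyMeasurable ?_
        filter_upwards [ae_restrict_mem measurableSet_Ioc] with y hy
        rw [Real.norm_eq_abs, abs_of_nonneg (mul_nonneg (pow_nonneg hy.1.le _) (hg0_nonneg _))]
        have h1 : y ^ (d - 1) ≤ 1 := pow_le_one₀ hy.1.le hy.2
        have h2 : K₁ y ^ ℓ ≤ C ^ (ℓ - 1) * C := by
          refine le_trans (h_rpow_le _ (hK₁_nonneg y) (hK₁_bdd y)) ?_
          exact mul_le_mul_of_nonneg_left (hK₁_bdd y) (Real.rpow_nonneg hC0 _)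
        calc y ^ (d - 1) * K₁ y ^ ℓ ≤ 1 * (C ^ (ℓ - 1) * C) :=
              mul_le_mul h1 h2 (hg0_nonneg _) zero_le_one
          _ = C ^ (ℓ - 1) * C := one_mul _
      · refine Integrable.mono'
          (((hK₀_int.mono_set (Set.Ioi_subset_Ioi zero_le_one))).const_mul (C ^ (ℓ - 1)))
          hmeas.aestronglyMeasurable ?_
        filter_upwards [ae_restrict_mem measurableSet_Ioi] with y hy
        have hy1 : (1:ℝ) ≤ y := le_of_lt hy
        have hy0 : (0:ℝ) ≤ y := le_trans zero_le_one hy1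
        rw [Real.norm_eq_abs, abs_of_nonneg (mul_nonneg (pow_nonneg hy0 _) (hg0_nonneg _))]
        have h1 : y ^ (d - 1) ≤ y ^ d := pow_le_pow_right₀ hy1 (Nat.sub_le d 1)
        have h2 : K₁ y ^ ℓ ≤ C ^ (ℓ - 1) * K₀ y := by
          rw [← hK₁_eq y hy0]
          exact h_rpow_le _ (hK₁_nonneg y) (hK₁_bdd y)
        calc y ^ (d - 1) * K₁ y ^ ℓ ≤ y ^ d * (C ^ (ℓ - 1) * K₀ y) :=
              mul_le_mul h1 h2 (hg0_nonneg _) (pow_nonneg hy0 _)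
          _ = C ^ (ℓ - 1) * (y ^ d * K₀ y) := by ring
    have hA_int : Integrable (fun x : EuclideanSpace ℝ (Fin d) => K₁ ‖x‖ ^ ℓ) :=
      aux_integrable_norm volume hg0_meas hg0_nonneg (by rw [hfr]; exact hint_radial)
    set A := ∫ x : EuclideanSpace ℝ (Fin d), K₁ ‖x‖ ^ ℓ with hA_def
    have hA0 : 0 ≤ A := integral_nonneg fun x => hg0_nonneg _
    have hd' : (1:ℝ) ≤ (d:ℝ) := by exact_mod_cast hd
    have hsqrt_pos : 0 < Real.sqrt d := Real.sqrt_pos.mpr (by linarith)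
    have hsqrt_one : 1 ≤ Real.sqrt d := by
      rw [show (1:ℝ) = Real.sqrt 1 from Real.sqrt_one.symm]
      exact Real.sqrt_le_sqrt (by linarith)
    set c : ℝ := 1 / (2 * Real.sqrt d) with hc_def
    have hc_pos : 0 < c := by positivity
    have hc_half : c ≤ 1/2 := by
      rw [hc_def]
      rw [div_le_div_iff₀ (by positivity) (by norm_num)]
      linarith
    have hKone : 0 < K₀ 1 ^ ℓ := Real.rpow_pos_of_pos hK₀_one ℓ
    refine ⟨L₁ * K₀ 1 ^ ℓ * c ^ d, max (L₁' * A) (L₁ * K₀ 1 ^ ℓ * c ^ d), by positivity,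
      le_max_right _ _, ?_⟩
    intro x₀ hx₀ h hh
    obtain ⟨hh0, hh1⟩ := hh
    have hhd : (0:ℝ) < h ^ d := pow_pos hh0 d
    rw [hI_eq x₀ h hh0]
    set F := fun x => fX x * K₁ (dist x x₀ / h) ^ ℓ with hF_def
    have hF_meas := hKmeas x₀ h
    have hF_nonneg : ∀ x, 0 ≤ F x := fun x => mul_nonneg (hfX0 x) (hg0_nonneg _)
    set G := fun x => K₁ (dist x x₀ / h) ^ ℓ with hG_def
    have hG_eq : G = fun x =>
        (fun z : EuclideanSpace ℝ (Fin d) => K₁ ‖z‖ ^ ℓ) (h⁻¹ • (x - x₀)) := by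
      funext x
      have : ‖h⁻¹ • (x - x₀)‖ = dist x x₀ / h := by
        rw [norm_smul, norm_inv, Real.norm_eq_abs, abs_of_pos hh0, ← dist_eq_norm,
          inv_mul_eq_div]
      simp only [hG_def, this]
    have hG_int : Integrable G := by
      rw [hG_eq]
      exact (hA_int.comp_smul (inv_ne_zero hh0.ne')).comp_sub_right x₀
    have hG_val : (∫ x, G x) = h ^ d * A := by
      rw [hG_eq]
      rw [integral_sub_right_eq_self
        (fun x : EuclideanSpace ℝ (Fin d) => K₁ ‖h⁻¹ • x‖ ^ ℓ) x₀]
      rw [Measure.integral_comp_inv_smul_of_nonneg volume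
        (fun z : EuclideanSpace ℝ (Fin d) => K₁ ‖z‖ ^ ℓ) hh0.le]
      rw [hfr, smul_eq_mul]
    have hF_le : ∀ x, F x ≤ L₁' * G x := by
      intro x
      by_cases hx : x ∈ cube
      · exact mul_le_mul_of_nonneg_right (hup x hx) (hg0_nonneg _)
      · simp only [hF_def, hsupp x hx, zero_mul]
        exact mul_nonneg (le_trans hL₁.le hL₁') (hg0_nonneg _)
    have hF_int : Integrable F := by
      refine Integrable.mono' (hG_int.const_mul L₁') hF_meas.aestronglyMeasurable ?_
      exact Filter.Eventually.of_forall fun x => by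
        rw [Real.norm_eq_abs, abs_of_nonneg (hF_nonneg x)]; exact hF_le x
    constructor
    · -- lower bound
      set t : ℝ := c * h with ht_def
      have ht_pos : 0 < t := mul_pos hc_pos hh0
      have ht_half : t ≤ 1/2 := by
        calc t = c * h := ht_def
          _ ≤ (1/2) * 1 := mul_le_mul hc_half hh1 hh0.le (by norm_num)
          _ = 1/2 := by norm_num
      set a : Fin d → ℝ := fun i => if x₀ i + t ≤ 1 then x₀ i else x₀ i - t with ha_def
      have hx₀mem : ∀ i, x₀ i ∈ Set.Icc (0:ℝ) 1 := by rw [hcube] at hx₀; exact hx₀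
      have ha_bounds : ∀ i, 0 ≤ a i ∧ a i + t ≤ 1 ∧ a i ≤ x₀ i ∧ x₀ i ≤ a i + t := by
        intro i
        rcases hx₀mem i with ⟨h0i, h1i⟩
        by_cases hcase : x₀ i + t ≤ 1
        · simp only [ha_def, if_pos hcase]
          exact ⟨h0i, hcase, le_refl _, by linarith⟩
        · simp only [ha_def, if_neg hcase]
          push_neg at hcase
          exact ⟨by linarith, by linarith, by linarith, by linarith⟩
      set S : Set (EuclideanSpace ℝ (Fin d)) :=
        (MeasurableEquiv.toLp 2 (Fin d → ℝ)).symm ⁻¹'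
          (Set.univ.pi fun i => Set.Icc (a i) (a i + t)) with hS_def
      have hS_mem : ∀ y : EuclideanSpace ℝ (Fin d),
          y ∈ S ↔ ∀ i, y i ∈ Set.Icc (a i) (a i + t) := by
        intro y
        rw [hS_def, Set.mem_preimage, Set.mem_univ_pi]
        exact Iff.rfl
      have hS_meas : MeasurableSet S :=
        (MeasurableSet.univ_pi fun i => measurableSet_Icc).preimage
          (MeasurableEquiv.measurable _)
      have hS_vol : volume S = ENNReal.ofReal t ^ d := by
        rw [hS_def, (EuclideanSpace.volume_preserving_symm_measurableEquiv_toLp (Fin d)).measure_preimage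
          (MeasurableSet.univ_pi fun i => measurableSet_Icc).nullMeasurableSet]
        rw [volume_pi_pi]
        simp [Real.volume_Icc]
      have hS_cube : S ⊆ cube := by
        intro y hy
        rw [hcube]
        intro i
        rcases (hS_mem y).mp hy i with ⟨hyl, hyr⟩
        rcases ha_bounds i with ⟨hb1, hb2, _, _⟩
        exact ⟨by linarith, by linarith⟩
      have hS_dist : ∀ y ∈ S, dist y x₀ ≤ h := by
        intro y hy
        have hsum : ∑ i, dist (y i) (x₀ i) ^ 2 ≤ (h/2)^2 := by
          have hterm : ∀ i, dist (y i) (x₀ i) ^ 2 ≤ t ^ 2 := by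
            intro i
            rcases (hS_mem y).mp hy i with ⟨hyl, hyr⟩
            rcases ha_bounds i with ⟨_, _, hb3, hb4⟩
            have habs : |y i - x₀ i| ≤ t := abs_sub_le_iff.mpr ⟨by linarith, by linarith⟩
            rw [Real.dist_eq]
            nlinarith [abs_nonneg (y i - x₀ i)]
          have hsq : Real.sqrt d ^ 2 = (d:ℝ) := Real.sq_sqrt (by linarith)
          calc ∑ i, dist (y i) (x₀ i) ^ 2 ≤ ∑ _i : Fin d, t ^ 2 :=
                Finset.sum_le_sum fun i _ => hterm i
            _ = d * t ^ 2 := by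
                rw [Finset.sum_const, Finset.card_univ, Fintype.card_fin, nsmul_eq_mul]
            _ = (h/2)^2 := by
                rw [ht_def, hc_def]
                field_simp
                nlinarith [hsq]
        have hd2 : dist y x₀ ≤ h/2 := by
          rw [EuclideanSpace.dist_eq]
          calc Real.sqrt (∑ i, dist (y i) (x₀ i) ^ 2) ≤ Real.sqrt ((h/2)^2) :=
                Real.sqrt_le_sqrt hsum
            _ = h/2 := Real.sqrt_sq (by linarith)
        linarith
      have hlow' : ∀ y ∈ S, L₁ * K₀ 1 ^ ℓ ≤ F y := by
        intro y hy
        have hyc := hS_cube hy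
        have hdle : dist y x₀ / h ≤ 1 := (div_le_one hh0).mpr (hS_dist y hy)
        have hK : K₀ 1 ≤ K₁ (dist y x₀ / h) := by
          rw [hK₁_eq _ (div_nonneg dist_nonneg hh0.le)]
          exact hK₀_anti (Set.mem_Ici.mpr (div_nonneg dist_nonneg hh0.le))
            (Set.mem_Ici.mpr zero_le_one) hdle
        have hKp : K₀ 1 ^ ℓ ≤ K₁ (dist y x₀ / h) ^ ℓ :=
          Real.rpow_le_rpow (hK₀_nonneg 1) hK hℓ0.le
        exact mul_le_mul (hlow y hyc) hKp hKone.le (le_trans hL₁.le (hlow y hyc))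
      have h2 : L₁ * K₀ 1 ^ ℓ * (volume S).toReal ≤ ∫ y in S, F y :=
        by have := setIntegral_ge_of_const_le hS_meas
             (by rw [hS_vol]; exact ENNReal.pow_ne_top ENNReal.ofReal_ne_top)
             hlow' hF_int.integrableOn
           rw [smul_eq_mul, mul_comm] at this; exact this
      have h3 : (∫ y in S, F y) ≤ ∫ y, F y :=
        setIntegral_le_integral hF_int (Filter.Eventually.of_forall hF_nonneg)
      have hvolS : (volume S).toReal = t ^ d := by
        rw [hS_vol, ← ENNReal.ofReal_pow ht_pos.le, ENNReal.toReal_ofReal (by positivity)]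
      rw [le_div_iff₀ hhd]
      have hrw : L₁ * K₀ 1 ^ ℓ * c ^ d * h ^ d = L₁ * K₀ 1 ^ ℓ * t ^ d := by
        rw [ht_def, mul_pow]; ring
      rw [hrw]
      rw [hvolS] at h2
      linarith
    · -- upper bound
      have hup' : (∫ x, F x) ≤ L₁' * (h ^ d * A) := by
        calc (∫ x, F x) ≤ ∫ x, L₁' * G x :=
              integral_mono hF_int (hG_int.const_mul L₁') hF_le
          _ = L₁' * ∫ x, G x := integral_const_mul _ _
          _ = L₁' * (h ^ d * A) := by rw [hG_val]
      rw [div_le_iff₀ hhd]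
      calc (∫ x, F x) ≤ L₁' * (h ^ d * A) := hup'
        _ = (L₁' * A) * h ^ d := by ring
        _ ≤ max (L₁' * A) (L₁ * K₀ 1 ^ ℓ * c ^ d) * h ^ d :=
            mul_le_mul_of_nonneg_right (le_max_left _ _) hhd.le
end

section
/- Under the kernel and density assumptions of the kernel moment bound, let f : [0,1]^d → ℝ be L-Lipschitz. Fix x₀ ∈ [0,1]^d and let X̃ have density proportional to K(x₀, ·; h) on [0,1]^d, independent of X. Then there exists a constant L̄₃ < ∞ (depending on d, L, K₀, and the density bounds) such that E[|f(x₀) − f(X)| · K(X̃, X; h)] ≤ L̄₃ h^{d+1}. -/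
open MeasureTheory Set Metric

lemma lintegral_fun_norm_euclid (n : ℕ) (f : ℝ → ENNReal) (hf : Measurable f) :
    ∫⁻ x : EuclideanSpace ℝ (Fin (n+1)), f ‖x‖
      = (volume : Measure (EuclideanSpace ℝ (Fin (n+1)))).toSphere univ
        * ∫⁻ r in Ioi (0:ℝ), ENNReal.ofReal (r ^ n) * f r := by
  set E := EuclideanSpace ℝ (Fin (n+1)) with hE
  set μ : Measure E := volume with hμ
  have hdim : Module.finrank ℝ E = n + 1 := finrank_euclideanSpace_fin
  have h1 : ∫⁻ x, f ‖x‖ ∂μ = ∫⁻ x : ({(0:E)}ᶜ : Set E), f ‖x.1‖ ∂(μ.comap (↑)) := by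
    rw [lintegral_subtype_comap (measurableSet_singleton _).compl fun x ↦ f ‖x‖,
      MeasureTheory.restrict_compl_singleton]
  rw [h1]
  have h2 := (μ.measurePreserving_homeomorphUnitSphereProd).lintegral_comp
    (f := fun p : sphere (0:E) 1 × Ioi (0:ℝ) => f p.2.1)
    (show Measurable fun p : sphere (0:E) 1 × Ioi (0:ℝ) => f p.2.1 from
      hf.comp (measurable_subtype_coe.comp measurable_snd))
  rw [show (∫⁻ x : ({(0:E)}ᶜ : Set E), f ‖x.1‖ ∂(μ.comap (↑)))
      = ∫⁻ x : ({(0:E)}ᶜ : Set E), (fun p : sphere (0:E) 1 × Ioi (0:ℝ) => f p.2.1)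
          ((homeomorphUnitSphereProd E) x) ∂(μ.comap (↑)) from
        lintegral_congr fun x => by show _ = f (‖x.1‖ / 1); rw [div_one], h2]
  have h3 : ∫⁻ r : Ioi (0:ℝ), f r.1 ∂(Measure.volumeIoiPow (Module.finrank ℝ E - 1))
      = ∫⁻ r in Ioi (0:ℝ), ENNReal.ofReal (r ^ n) * f r := by
    rw [Measure.volumeIoiPow, hdim]
    simp only [Nat.add_sub_cancel]
    rw [lintegral_withDensity_eq_lintegral_mul _
        (show Measurable fun r : Ioi (0:ℝ) => ENNReal.ofReal (r.1 ^ n) from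
          (measurable_subtype_coe.pow_const n).ennreal_ofReal)
        (show Measurable fun r : Ioi (0:ℝ) => f r.1 from hf.comp measurable_subtype_coe)]
    rw [show (∫⁻ r : Ioi (0:ℝ), ((fun r : Ioi (0:ℝ) => ENNReal.ofReal (r.1 ^ n)) * fun r : Ioi (0:ℝ) => f r.1) r
          ∂(Measure.comap Subtype.val volume))
        = ∫⁻ r : Ioi (0:ℝ), (fun s : ℝ => ENNReal.ofReal (s ^ n) * f s) r.1
          ∂(Measure.comap Subtype.val volume) from rfl]
    exact lintegral_subtype_comap measurableSet_Ioi fun s => ENNReal.ofReal (s ^ n) * f s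
  rw [MeasureTheory.lintegral_prod (f := fun p : sphere (0:E) 1 × Ioi (0:ℝ) => f p.2.1)
      (show Measurable fun p : sphere (0:E) 1 × Ioi (0:ℝ) => f p.2.1 from
        hf.comp (measurable_subtype_coe.comp measurable_snd)).aemeasurable]
  simp only
  rw [lintegral_congr (fun a => h3), lintegral_const, mul_comm]


lemma radial_finite (n m : ℕ) (hm : m ≤ 1) (K' : ℝ → ℝ) (C : ℝ) (hmeas : Measurable K')
    (hnn : ∀ u, 0 ≤ K' u) (hbdd : ∀ u, K' u ≤ C)
    (hint : IntegrableOn (fun u => u ^ (n+1) * K' u) (Ioi (0:ℝ))) :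
    ∫⁻ x : EuclideanSpace ℝ (Fin (n+1)), ENNReal.ofReal (‖x‖ ^ m * K' ‖x‖) < ⊤ := by
  have hC : 0 ≤ C := le_trans (hnn 0) (hbdd 0)
  have hmeas' : Measurable fun r : ℝ => ENNReal.ofReal (r ^ m * K' r) :=
    ((measurable_id.pow_const m).mul hmeas).ennreal_ofReal
  rw [lintegral_fun_norm_euclid n _ hmeas']
  refine ENNReal.mul_lt_top (measure_lt_top _ _) ?_
  have hsplit : (Ioi (0:ℝ)) = Ioc (0:ℝ) 1 ∪ Ioi 1 := (Set.Ioc_union_Ioi_eq_Ioi zero_le_one).symm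
  rw [hsplit, lintegral_union measurableSet_Ioi (Set.Ioc_disjoint_Ioi le_rfl)]
  refine ENNReal.add_lt_top.2 ⟨?_, ?_⟩
  · calc ∫⁻ r in Ioc (0:ℝ) 1, ENNReal.ofReal (r ^ n) * ENNReal.ofReal (r ^ m * K' r)
        ≤ ∫⁻ _ in Ioc (0:ℝ) 1, ENNReal.ofReal C := by
          refine lintegral_mono_ae ?_
          filter_upwards [ae_restrict_mem measurableSet_Ioc] with r hr
          rw [← ENNReal.ofReal_mul (pow_nonneg hr.1.le n)]
          refine ENNReal.ofReal_le_ofReal ?_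
          have h1 : r ^ n ≤ 1 := pow_le_one₀ hr.1.le hr.2
          have h2 : r ^ m ≤ 1 := pow_le_one₀ hr.1.le hr.2
          calc r ^ n * (r ^ m * K' r) ≤ 1 * (1 * C) := by
                refine mul_le_mul h1 (mul_le_mul h2 (hbdd r) (hnn r) zero_le_one) (mul_nonneg (pow_nonneg hr.1.le m) (hnn r)) zero_le_one
            _ = C := by ring
      _ < ⊤ := by
          rw [setLIntegral_const]
          exact ENNReal.mul_lt_top ENNReal.ofReal_lt_top (by simp [Real.volume_Ioc])
  · calc ∫⁻ r in Ioi (1:ℝ), ENNReal.ofReal (r ^ n) * ENNReal.ofReal (r ^ m * K' r)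
        ≤ ∫⁻ r in Ioi (1:ℝ), ENNReal.ofReal (r ^ (n+1) * K' r) := by
          refine lintegral_mono_ae ?_
          filter_upwards [ae_restrict_mem measurableSet_Ioi] with r hr
          have h0 : (0:ℝ) < r := lt_trans zero_lt_one hr
          rw [← ENNReal.ofReal_mul (pow_nonneg h0.le n)]
          refine ENNReal.ofReal_le_ofReal ?_
          have : r ^ n * r ^ m ≤ r ^ (n + 1) := by
            rw [← pow_add]
            exact pow_le_pow_right₀ hr.le (by omega)
          calc r ^ n * (r ^ m * K' r) = r ^ n * r ^ m * K' r := by ring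
            _ ≤ r ^ (n+1) * K' r := mul_le_mul_of_nonneg_right this (hnn r)
      _ ≤ ∫⁻ r in Ioi (0:ℝ), ENNReal.ofReal (r ^ (n+1) * K' r) :=
          lintegral_mono_set (Set.Ioi_subset_Ioi zero_le_one)
      _ ≤ ∫⁻ r in Ioi (0:ℝ), ‖r ^ (n+1) * K' r‖ₑ :=
          lintegral_mono fun r => Real.ofReal_le_enorm _
      _ < ⊤ := hint.2

lemma lintegral_kernel_shift_scale (n : ℕ) (φ : ℝ → ENNReal) (hφ : Measurable φ)
    (h : ℝ) (hh : 0 < h) (xt : EuclideanSpace ℝ (Fin (n+1))) :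
    ∫⁻ x : EuclideanSpace ℝ (Fin (n+1)), φ (dist xt x / h)
      = ENNReal.ofReal (h ^ (n+1)) * ∫⁻ y : EuclideanSpace ℝ (Fin (n+1)), φ ‖y‖ := by
  have E : Unit := ()
  have step1 : ∫⁻ x : EuclideanSpace ℝ (Fin (n+1)), φ (dist xt x / h) = ∫⁻ x : EuclideanSpace ℝ (Fin (n+1)), φ (‖x‖ / h) := by
    have : ∀ x : EuclideanSpace ℝ (Fin (n+1)), φ (dist xt x / h) = (fun y : EuclideanSpace ℝ (Fin (n+1)) => φ (‖y‖ / h)) (x + (-xt)) := by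
      intro x
      simp only [← sub_eq_add_neg, dist_comm xt x, dist_eq_norm]
    simp_rw [this]
    exact lintegral_add_right_eq_self (fun y : EuclideanSpace ℝ (Fin (n+1)) => φ (‖y‖ / h)) (-xt)
  have step2 : ∫⁻ x : EuclideanSpace ℝ (Fin (n+1)), φ (‖x‖ / h) = ∫⁻ x : EuclideanSpace ℝ (Fin (n+1)), (fun y : EuclideanSpace ℝ (Fin (n+1)) => φ ‖y‖) (h⁻¹ • x) := by
    refine lintegral_congr fun x => ?_
    show φ (‖x‖ / h) = φ ‖h⁻¹ • x‖
    congr 1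
    rw [norm_smul, norm_inv, Real.norm_eq_abs, abs_of_pos hh, inv_mul_eq_div]
  rw [step1, step2, ← lintegral_map (show Measurable fun y : EuclideanSpace ℝ (Fin (n+1)) => φ ‖y‖ from hφ.comp measurable_norm) (measurable_const_smul h⁻¹),
    Measure.map_addHaar_smul volume (inv_ne_zero hh.ne'), lintegral_smul_measure]
  congr 1
  rw [finrank_euclideanSpace_fin, ← inv_pow, inv_inv, abs_of_pos (by positivity)]


lemma euclid_box_meas (d : ℕ) (S : Fin d → Set ℝ) (hS : ∀ i, MeasurableSet (S i)) :
    MeasurableSet {x : EuclideanSpace ℝ (Fin d) | ∀ i, x i ∈ S i} := by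
  have hset : {x : EuclideanSpace ℝ (Fin d) | ∀ i, x i ∈ S i}
      = (MeasurableEquiv.toLp 2 (Fin d → ℝ)).symm ⁻¹' (Set.univ.pi S) := by
    ext x; simp [Set.mem_pi]
  rw [hset]
  exact (MeasurableEquiv.toLp 2 (Fin d → ℝ)).symm.measurable (MeasurableSet.univ_pi hS)

lemma euclid_box_vol (d : ℕ) (S : Fin d → Set ℝ) (hS : ∀ i, MeasurableSet (S i)) :
    volume {x : EuclideanSpace ℝ (Fin d) | ∀ i, x i ∈ S i} = ∏ i, volume (S i) := by
  have hset : {x : EuclideanSpace ℝ (Fin d) | ∀ i, x i ∈ S i}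
      = (MeasurableEquiv.toLp 2 (Fin d → ℝ)).symm ⁻¹' (Set.univ.pi S) := by
    ext x; simp [Set.mem_pi]
  rw [hset, (EuclideanSpace.volume_preserving_symm_measurableEquiv_toLp (Fin d)).measure_preimage
    (MeasurableSet.univ_pi hS).nullMeasurableSet]
  exact MeasureTheory.volume_pi_pi S



set_option maxHeartbeats 2000000 in
/-- RLCP localization-bias bound: under the kernel and density assumptions of the
kernel moment bound, if `f` is `Lf`-Lipschitz on `[0,1]^d`, `X ~ μ` and the auxiliary
point `X̃` has density proportional to `K₀(‖· - x₀‖/h)` on `[0,1]^d`, then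
`E[|f(x₀) - f(X)| K₀(‖X̃ - X‖/h)] ≤ L₃' h^{d+1}` uniformly in `x₀ ∈ [0,1]^d` and
`h ∈ (0,1]`. -/
theorem stmt_12 (d : ℕ) (L₁ L₁' : ℝ) (hL₁ : 0 < L₁) (hL₁' : L₁ ≤ L₁')
    (fX : EuclideanSpace ℝ (Fin d) → ℝ) (hfX_meas : Measurable fX)
    (cube : Set (EuclideanSpace ℝ (Fin d)))
    (hcube : cube = {x | ∀ i, x i ∈ Set.Icc (0:ℝ) 1})
    (hsupp : ∀ x ∉ cube, fX x = 0)
    (hlow : ∀ x ∈ cube, L₁ ≤ fX x) (hup : ∀ x ∈ cube, fX x ≤ L₁')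
    (μ : Measure (EuclideanSpace ℝ (Fin d)))
    (hμ : μ = volume.withDensity fun x => ENNReal.ofReal (fX x))
    (hprob : IsProbabilityMeasure μ)
    (K₀ : ℝ → ℝ) (C : ℝ)
    (hK₀_nonneg : ∀ u, 0 ≤ K₀ u) (hK₀_bdd : ∀ u, K₀ u ≤ C)
    (hK₀_anti : AntitoneOn K₀ (Set.Ici 0))
    (hK₀_tail : AntitoneOn (fun u => u * K₀ u) (Set.Ioi 1))
    (hK₀_int : IntegrableOn (fun u => u ^ d * K₀ u) (Set.Ioi (0:ℝ)))
    (hK₀_one : 0 < K₀ 1)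
    (f : EuclideanSpace ℝ (Fin d) → ℝ) (Lf : ℝ) (hLf : 0 ≤ Lf)
    (hf_lip : ∀ x ∈ cube, ∀ y ∈ cube, |f x - f y| ≤ Lf * dist x y) :
    ∃ L₃' : ℝ, ∀ x₀ ∈ cube, ∀ h ∈ Set.Ioc (0:ℝ) 1,
      (∫ xt, (∫ x, |f x₀ - f x| * K₀ (dist xt x / h) ∂μ)
          ∂((volume.restrict cube).withDensity fun xt =>
              ENNReal.ofReal (K₀ (dist xt x₀ / h) / ∫ y in cube, K₀ (dist y x₀ / h))))
        ≤ L₃' * h ^ (d + 1) := by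
  by_cases hd0 : d = 0
  · subst hd0
    refine ⟨1, fun x₀ _ h hh => ?_⟩
    have hsing : ∀ x : EuclideanSpace ℝ (Fin 0), x = x₀ := fun x => (WithLp.ext_iff _).2 (funext fun i => i.elim0)
    have hzero : ∀ xt : EuclideanSpace ℝ (Fin 0),
        (∫ x, |f x₀ - f x| * K₀ (dist xt x / h) ∂μ) = 0 := by
      intro xt
      have : ∀ x : EuclideanSpace ℝ (Fin 0), |f x₀ - f x| * K₀ (dist xt x / h) = 0 := by
        intro x; rw [hsing x]; simp
      simp only [this, integral_zero]
    simp only [hzero, integral_zero, one_mul]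
    exact pow_nonneg hh.1.le _
  obtain ⟨n, rfl⟩ : ∃ n, d = n + 1 := ⟨d - 1, by omega⟩
  -- the measurable monotone kernel
  set K' : ℝ → ℝ := fun u => K₀ (max u 0) with hK'def
  have hK'anti : Antitone K' := fun u v huv =>
    hK₀_anti (le_max_right u 0) (le_max_right v 0) (max_le_max huv le_rfl)
  have hK'meas : Measurable K' := hK'anti.measurable
  have hK'eq : ∀ u : ℝ, 0 ≤ u → K' u = K₀ u := fun u hu => by
    rw [hK'def]; simp [max_eq_left hu]
  have hK'nonneg : ∀ u, 0 ≤ K' u := fun u => hK₀_nonneg _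
  have hK'bdd : ∀ u, K' u ≤ C := fun u => hK₀_bdd _
  have hC : 0 ≤ C := le_trans (hK₀_nonneg 0) (hK₀_bdd 0)
  have hK'int : IntegrableOn (fun u => u ^ (n+1) * K' u) (Ioi (0:ℝ)) := by
    refine hK₀_int.congr_fun (fun u hu => ?_) measurableSet_Ioi
    rw [hK'eq u (le_of_lt hu)]
  -- radial integrals
  set A' : ENNReal := ∫⁻ y : EuclideanSpace ℝ (Fin (n+1)), ENNReal.ofReal (K' ‖y‖) with hA'def
  set B' : ENNReal := ∫⁻ y : EuclideanSpace ℝ (Fin (n+1)), ENNReal.ofReal (‖y‖ * K' ‖y‖) with hB'def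
  have hA'fin : A' < ⊤ := by
    have := radial_finite n 0 (by norm_num) K' C hK'meas hK'nonneg hK'bdd hK'int
    simpa using this
  have hB'fin : B' < ⊤ := by
    have := radial_finite n 1 le_rfl K' C hK'meas hK'nonneg hK'bdd hK'int
    simpa only [pow_one] using this
  -- Lipschitz extension
  have hlip : LipschitzOnWith (Real.toNNReal Lf) f cube := by
    rw [lipschitzOnWith_iff_dist_le_mul]
    intro x hx y hy
    rw [Real.dist_eq]
    calc |f x - f y| ≤ Lf * dist x y := hf_lip x hx y hy
      _ = (Real.toNNReal Lf : ℝ) * dist x y := by rw [Real.coe_toNNReal Lf hLf]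
  obtain ⟨ft, hft_lip, hft_eq⟩ := hlip.extend_real
  have hft_meas : Measurable ft := hft_lip.continuous.measurable
  -- cube facts
  have hcube_meas : MeasurableSet cube := by
    rw [hcube]; exact euclid_box_meas _ _ (fun i => measurableSet_Icc)
  have hcube_vol : volume cube = 1 := by
    rw [hcube, euclid_box_vol _ _ (fun i => measurableSet_Icc)]
    simp [Real.volume_Icc]
  have hmu_ae : ∀ᵐ x ∂μ, x ∈ cube := by
    have hcc : μ cubeᶜ = 0 := by
      rw [hμ, withDensity_apply _ hcube_meas.compl]
      rw [setLIntegral_congr_fun hcube_meas.compl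
        (fun x hx => by rw [hsupp x hx]; simp : ∀ x ∈ cubeᶜ,
          ENNReal.ofReal (fX x) = (0:ENNReal))]
      simp
    rw [ae_iff]
    exact hcc
  have hf_ae : f =ᵐ[μ] ft := hmu_ae.mono fun x hx => hft_eq hx
  have hfX_le : ∀ x, fX x ≤ L₁' := by
    intro x
    by_cases hx : x ∈ cube
    · exact hup x hx
    · rw [hsupp x hx]; exact le_trans hL₁.le hL₁'
  have hL₁'pos : 0 < L₁' := lt_of_lt_of_le hL₁ hL₁'
  -- constants
  set sd : ℝ := Real.sqrt (n+1) with hsddef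
  have hsd1 : 1 ≤ sd := by
    rw [hsddef]
    nlinarith [Real.sq_sqrt (show (0:ℝ) ≤ (n:ℝ)+1 by positivity),
      Real.sqrt_nonneg ((n:ℝ)+1)]
  have hsd0 : 0 < sd := lt_of_lt_of_le one_pos hsd1
  set cz : ℝ := K₀ 1 * ((2 * sd)⁻¹) ^ (n+1) with hczdef
  have hcz : 0 < cz := by positivity
  set M : ENNReal := ENNReal.ofReal Lf * ENNReal.ofReal L₁' * 2 * ENNReal.ofReal cz⁻¹ * A' * B'
    with hMdef
  have hMfin : M ≠ ⊤ := by
    rw [hMdef]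
    exact ENNReal.mul_ne_top (ENNReal.mul_ne_top (ENNReal.mul_ne_top (ENNReal.mul_ne_top
      (ENNReal.mul_ne_top ENNReal.ofReal_ne_top ENNReal.ofReal_ne_top) (by norm_num))
      ENNReal.ofReal_ne_top) hA'fin.ne) hB'fin.ne
  refine ⟨M.toReal, fun x₀ hx₀ h hh => ?_⟩
  obtain ⟨hh0, hh1⟩ := hh
  set Z : ℝ := ∫ y in cube, K₀ (dist y x₀ / h) with hZdef
  -- the small box around x₀
  set r : ℝ := h * (2 * sd)⁻¹ with hrdef
  have hr0 : 0 < r := by positivity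
  set a : Fin (n+1) → ℝ := fun i => if x₀ i + r ≤ 1 then x₀ i else x₀ i - r with hadef
  set Box : Set (EuclideanSpace ℝ (Fin (n+1))) := {y | ∀ i, y i ∈ Icc (a i) (a i + r)}
    with hBoxdef
  have hx₀c : ∀ i, x₀ i ∈ Icc (0:ℝ) 1 := by
    intro i
    have := hx₀
    rw [hcube] at this
    exact this i
  have hbox_meas : MeasurableSet Box := euclid_box_meas _ _ (fun i => measurableSet_Icc)
  have hbox_vol : volume Box = ENNReal.ofReal r ^ (n+1) := by
    rw [hBoxdef, euclid_box_vol _ _ (fun i => measurableSet_Icc)]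
    simp [Real.volume_Icc]
  have hbox_sub : Box ⊆ cube := by
    intro y hy
    rw [hcube]
    intro i
    have hyi := hy i
    have hxi := hx₀c i
    rw [hadef] at hyi
    simp only at hyi
    constructor
    · by_cases hc : x₀ i + r ≤ 1
      · rw [if_pos hc] at hyi; linarith [hyi.1, hxi.1]
      · rw [if_neg hc] at hyi
        push_neg at hc
        have hr2 : r ≤ 1 / 2 := by
          rw [hrdef]
          calc h * (2*sd)⁻¹ ≤ 1 * (2*1)⁻¹ := by
                apply mul_le_mul hh1 _ (by positivity) (by norm_num)
                apply inv_anti₀ (by norm_num)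
                linarith
            _ = 1/2 := by norm_num
        linarith [hyi.1, hxi.2]
    · by_cases hc : x₀ i + r ≤ 1
      · rw [if_pos hc] at hyi; linarith [hyi.2]
      · rw [if_neg hc] at hyi; linarith [hyi.2, hxi.2]
  have hbox_close : ∀ y ∈ Box, dist y x₀ ≤ h / 2 := by
    intro y hy
    have hbd : ∀ i, dist (y i) (x₀ i) ^ 2 ≤ r ^ 2 := by
      intro i
      have hyi := hy i
      rw [hadef] at hyi
      simp only at hyi
      have habs : |y i - x₀ i| ≤ r := by
        by_cases hc : x₀ i + r ≤ 1
        · rw [if_pos hc] at hyi; rw [abs_le]; constructor <;> [linarith [hyi.1]; linarith [hyi.2]]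
        · rw [if_neg hc] at hyi; rw [abs_le]; constructor <;> [linarith [hyi.1]; linarith [hyi.2]]
      rw [Real.dist_eq]
      exact pow_le_pow_left₀ (abs_nonneg _) habs 2
    rw [EuclideanSpace.dist_eq]
    have hsum : (∑ i, dist (y i) (x₀ i) ^ 2) ≤ (n+1 : ℝ) * r ^ 2 := by
      calc (∑ i, dist (y i) (x₀ i) ^ 2) ≤ ∑ _i : Fin (n+1), r ^ 2 :=
            Finset.sum_le_sum (fun i _ => hbd i)
        _ = (n+1 : ℝ) * r ^ 2 := by
            rw [Finset.sum_const, Finset.card_univ, Fintype.card_fin, nsmul_eq_mul]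
            push_cast
            ring
    calc Real.sqrt (∑ i, dist (y i) (x₀ i) ^ 2) ≤ Real.sqrt ((n+1:ℝ) * r ^ 2) :=
          Real.sqrt_le_sqrt hsum
      _ = sd * r := by
          rw [Real.sqrt_mul (by positivity), Real.sqrt_sq hr0.le, hsddef]
      _ = h / 2 := by
          rw [hrdef]
          field_simp
  -- integrand description
  have harg : ∀ c y : EuclideanSpace ℝ (Fin (n+1)), K₀ (dist y c / h) = K' (dist y c / h) :=
    fun c y => (hK'eq _ (by positivity)).symm
  have hZmeas : Measurable fun y : EuclideanSpace ℝ (Fin (n+1)) => K' (dist y x₀ / h) :=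
    hK'meas.comp ((measurable_id.dist measurable_const).div_const h)
  have hZint : IntegrableOn (fun y => K₀ (dist y x₀ / h)) cube := by
    rw [show (fun y : EuclideanSpace ℝ (Fin (n+1)) => K₀ (dist y x₀ / h))
        = fun y => K' (dist y x₀ / h) from funext (harg x₀)]
    refine Measure.integrableOn_of_bounded (M := C) (by rw [hcube_vol]; exact ENNReal.one_ne_top)
      hZmeas.aestronglyMeasurable ?_
    filter_upwards with y
    rw [Real.norm_eq_abs, abs_of_nonneg (hK'nonneg _)]
    exact hK'bdd _
  have hZlb : cz * h ^ (n+1) ≤ Z := by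
    have step1 : ∫ y in Box, K₀ (dist y x₀ / h) ≤ Z := by
      rw [hZdef]
      refine setIntegral_mono_set hZint ?_ (Filter.Eventually.of_forall hbox_sub)
      filter_upwards with y using hK₀_nonneg _
    have step2 : ∫ y in Box, (K₀ 1 : ℝ) ≤ ∫ y in Box, K₀ (dist y x₀ / h) := by
      refine setIntegral_mono_on (integrableOn_const ?_)
        (hZint.mono_set hbox_sub) hbox_meas ?_
      · rw [hbox_vol]
        exact (ENNReal.pow_lt_top ENNReal.ofReal_lt_top).ne
      · intro y hy
        refine hK₀_anti (mem_Ici.mpr (by positivity)) (mem_Ici.mpr zero_le_one) ?_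
        rw [div_le_one hh0]
        calc dist y x₀ ≤ h / 2 := hbox_close y hy
          _ ≤ h := by linarith
    have step3 : (∫ y in Box, (K₀ 1 : ℝ)) = K₀ 1 * r ^ (n+1) := by
      rw [setIntegral_const, measureReal_def, hbox_vol]
      rw [ENNReal.toReal_pow, ENNReal.toReal_ofReal hr0.le]
      simp [mul_comm]
    have hrpow : K₀ 1 * r ^ (n+1) = cz * h ^ (n+1) := by
      rw [hczdef, hrdef, mul_pow]
      ring
    linarith [step1, step2, step3.symm.le, hrpow]
  have hZpos : 0 < Z := lt_of_lt_of_le (by positivity) hZlb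
  -- volume kernel integrals
  have hJ₀ : ∀ c : EuclideanSpace ℝ (Fin (n+1)),
      ∫⁻ x, ENNReal.ofReal (K' (dist c x / h)) = ENNReal.ofReal (h ^ (n+1)) * A' := by
    intro c
    rw [lintegral_kernel_shift_scale n (fun u => ENNReal.ofReal (K' u))
      hK'meas.ennreal_ofReal h hh0 c, hA'def]
  have hJ₁ : ∀ c : EuclideanSpace ℝ (Fin (n+1)),
      ∫⁻ x, ENNReal.ofReal (dist c x * K' (dist c x / h))
        = ENNReal.ofReal (h ^ (n+1)) * (ENNReal.ofReal h * B') := by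
    intro c
    have hpt : ∀ x : EuclideanSpace ℝ (Fin (n+1)),
        ENNReal.ofReal (dist c x * K' (dist c x / h))
          = (fun u => ENNReal.ofReal (h * (u * K' u))) (dist c x / h) := by
      intro x
      simp only
      congr 1
      field_simp
    rw [lintegral_congr hpt, lintegral_kernel_shift_scale n
      (fun u => ENNReal.ofReal (h * (u * K' u)))
      (((measurable_id.mul hK'meas).const_mul h).ennreal_ofReal) h hh0 c]
    congr 1
    rw [hB'def, ← lintegral_const_mul _ (show Measurable fun y : EuclideanSpace ℝ (Fin (n+1)) => ENNReal.ofReal (‖y‖ * K' ‖y‖) from (measurable_norm.mul (hK'meas.comp measurable_norm)).ennreal_ofReal)]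
    refine lintegral_congr fun y => ?_
    rw [← ENNReal.ofReal_mul hh0.le]
  -- inner integrand
  set G : EuclideanSpace ℝ (Fin (n+1)) → EuclideanSpace ℝ (Fin (n+1)) → ENNReal :=
    fun xt x => ENNReal.ofReal (|ft x₀ - ft x| * K' (dist xt x / h)) with hGdef
  have hG_joint : Measurable fun p : EuclideanSpace ℝ (Fin (n+1)) × EuclideanSpace ℝ (Fin (n+1)) =>
      G p.1 p.2 := by
    refine Measurable.ennreal_ofReal ?_
    exact ((measurable_const.sub (hft_meas.comp measurable_snd)).abs).mul
      (hK'meas.comp (measurable_dist.div_const h))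
  have hG_meas : ∀ xt, Measurable fun x => G xt x := fun xt =>
    hG_joint.comp (measurable_const.prodMk measurable_id)
  set inner' : EuclideanSpace ℝ (Fin (n+1)) → ENNReal := fun xt => ∫⁻ x, G xt x ∂μ
    with hinnerdef
  have hinner_meas : Measurable inner' := Measurable.lintegral_prod_right' hG_joint
  have h_inner_eq : ∀ xt, (∫ x, |f x₀ - f x| * K₀ (dist xt x / h) ∂μ) = (inner' xt).toReal := by
    intro xt
    have hcongr : (fun x => |f x₀ - f x| * K₀ (dist xt x / h))
        =ᵐ[μ] fun x => |ft x₀ - ft x| * K' (dist xt x / h) := by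
      filter_upwards [hf_ae, hmu_ae] with x hfx _
      rw [hfx, hft_eq hx₀, hK'eq _ (by positivity)]
    rw [integral_congr_ae hcongr, integral_eq_lintegral_of_nonneg_ae
      (f := fun x => |ft x₀ - ft x| * K' (dist xt x / h))
      (Filter.Eventually.of_forall fun x => mul_nonneg (abs_nonneg _) (hK'nonneg _))
      ((show Measurable fun x : EuclideanSpace ℝ (Fin (n+1)) =>
          |ft x₀ - ft x| * K' (dist xt x / h) from
        ((measurable_const.sub hft_meas).abs.mul
          (hK'meas.comp ((measurable_const.dist measurable_id).div_const h)))).aestronglyMeasurable)]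
  -- bounds on the μ-kernel integrals
  have hμle : ∀ (g : EuclideanSpace ℝ (Fin (n+1)) → ENNReal), Measurable g →
      ∫⁻ x, g x ∂μ ≤ ENNReal.ofReal L₁' * ∫⁻ x, g x := by
    intro g hg
    rw [hμ, lintegral_withDensity_eq_lintegral_mul _ hfX_meas.ennreal_ofReal hg,
      ← lintegral_const_mul _ hg]
    refine lintegral_mono fun x => ?_
    exact mul_le_mul_left (ENNReal.ofReal_le_ofReal (hfX_le x)) _
  have hI₀ : ∀ xt, ∫⁻ x, ENNReal.ofReal (K' (dist xt x / h)) ∂μ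
      ≤ ENNReal.ofReal L₁' * (ENNReal.ofReal (h ^ (n+1)) * A') := by
    intro xt
    calc ∫⁻ x, ENNReal.ofReal (K' (dist xt x / h)) ∂μ
        ≤ ENNReal.ofReal L₁' * ∫⁻ x, ENNReal.ofReal (K' (dist xt x / h)) :=
          hμle _ (hK'meas.comp ((measurable_const.dist measurable_id).div_const h)).ennreal_ofReal
      _ = ENNReal.ofReal L₁' * (ENNReal.ofReal (h ^ (n+1)) * A') := by rw [hJ₀ xt]
  have hI₁ : ∀ xt, ∫⁻ x, ENNReal.ofReal (dist xt x * K' (dist xt x / h)) ∂μ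
      ≤ ENNReal.ofReal L₁' * (ENNReal.ofReal (h ^ (n+1)) * (ENNReal.ofReal h * B')) := by
    intro xt
    calc ∫⁻ x, ENNReal.ofReal (dist xt x * K' (dist xt x / h)) ∂μ
        ≤ ENNReal.ofReal L₁' * ∫⁻ x, ENNReal.ofReal (dist xt x * K' (dist xt x / h)) :=
          hμle _ (((measurable_const.dist measurable_id).mul
            (hK'meas.comp ((measurable_const.dist measurable_id).div_const h))).ennreal_ofReal)
      _ = ENNReal.ofReal L₁' * (ENNReal.ofReal (h ^ (n+1)) * (ENNReal.ofReal h * B')) := by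
          rw [hJ₁ xt]
  -- pointwise bound for the inner integral
  have hinner_bd : ∀ xt, inner' xt
      ≤ ENNReal.ofReal Lf * (ENNReal.ofReal (dist x₀ xt)
          * (ENNReal.ofReal L₁' * (ENNReal.ofReal (h ^ (n+1)) * A'))
        + ENNReal.ofReal L₁' * (ENNReal.ofReal (h ^ (n+1)) * (ENNReal.ofReal h * B'))) := by
    intro xt
    have hstep : inner' xt ≤ ∫⁻ x, (ENNReal.ofReal Lf
        * (ENNReal.ofReal (dist x₀ xt) * ENNReal.ofReal (K' (dist xt x / h))
          + ENNReal.ofReal (dist xt x * K' (dist xt x / h)))) ∂μ := by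
      rw [hinnerdef]
      refine lintegral_mono_ae ?_
      filter_upwards [hmu_ae] with x hx
      rw [hGdef]
      simp only
      rw [← hft_eq hx₀, ← hft_eq hx]
      have h1 : |f x₀ - f x| ≤ Lf * (dist x₀ xt + dist xt x) := by
        calc |f x₀ - f x| ≤ Lf * dist x₀ x := hf_lip x₀ hx₀ x hx
          _ ≤ Lf * (dist x₀ xt + dist xt x) :=
            mul_le_mul_of_nonneg_left (dist_triangle x₀ xt x) hLf
      calc ENNReal.ofReal (|f x₀ - f x| * K' (dist xt x / h))
          ≤ ENNReal.ofReal ((Lf * (dist x₀ xt + dist xt x)) * K' (dist xt x / h)) :=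
            ENNReal.ofReal_le_ofReal
              (mul_le_mul_of_nonneg_right h1 (hK'nonneg _))
        _ = ENNReal.ofReal Lf
            * (ENNReal.ofReal (dist x₀ xt) * ENNReal.ofReal (K' (dist xt x / h))
              + ENNReal.ofReal (dist xt x * K' (dist xt x / h))) := by
            rw [show (Lf * (dist x₀ xt + dist xt x)) * K' (dist xt x / h)
                = Lf * (dist x₀ xt * K' (dist xt x / h) + dist xt x * K' (dist xt x / h)) by ring]
            rw [ENNReal.ofReal_mul hLf, ENNReal.ofReal_add
              (mul_nonneg dist_nonneg (hK'nonneg _)) (mul_nonneg dist_nonneg (hK'nonneg _)),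
              ENNReal.ofReal_mul dist_nonneg]
    refine le_trans hstep ?_
    have m1 : Measurable fun x : EuclideanSpace ℝ (Fin (n+1)) =>
        ENNReal.ofReal (K' (dist xt x / h)) :=
      (hK'meas.comp ((measurable_const.dist measurable_id).div_const h)).ennreal_ofReal
    have m2 : Measurable fun x : EuclideanSpace ℝ (Fin (n+1)) =>
        ENNReal.ofReal (dist xt x * K' (dist xt x / h)) :=
      ((measurable_const.dist measurable_id).mul
        (hK'meas.comp ((measurable_const.dist measurable_id).div_const h))).ennreal_ofReal
    rw [lintegral_const_mul _ (show Measurable fun x => ENNReal.ofReal (dist x₀ xt) * ENNReal.ofReal (K' (dist xt x / h)) + ENNReal.ofReal (dist xt x * K' (dist xt x / h)) from (measurable_const.mul m1).add m2)]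
    refine mul_le_mul_right ?_ _
    rw [lintegral_add_left (show Measurable fun x => ENNReal.ofReal (dist x₀ xt) * ENNReal.ofReal (K' (dist xt x / h)) from measurable_const.mul m1), lintegral_const_mul _ m1]
    exact add_le_add (mul_le_mul_right (hI₀ xt) _) (hI₁ xt)
  have hfin : ∀ xt, inner' xt ≠ ⊤ := by
    intro xt
    refine ne_top_of_le_ne_top ?_ (hinner_bd xt)
    exact ENNReal.mul_ne_top ENNReal.ofReal_ne_top (ENNReal.add_ne_top.mpr
      ⟨ENNReal.mul_ne_top ENNReal.ofReal_ne_top (ENNReal.mul_ne_top ENNReal.ofReal_ne_top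
        (ENNReal.mul_ne_top ENNReal.ofReal_ne_top hA'fin.ne)),
       ENNReal.mul_ne_top ENNReal.ofReal_ne_top (ENNReal.mul_ne_top ENNReal.ofReal_ne_top
        (ENNReal.mul_ne_top ENNReal.ofReal_ne_top hB'fin.ne))⟩)
  -- rewrite the outer density
  have hw_eq : (fun xt : EuclideanSpace ℝ (Fin (n+1)) => ENNReal.ofReal (K₀ (dist xt x₀ / h) / Z))
      = fun xt => ENNReal.ofReal (K' (dist xt x₀ / h)) * ENNReal.ofReal Z⁻¹ := by
    funext xt
    rw [div_eq_mul_inv, ENNReal.ofReal_mul (hK₀_nonneg _), harg x₀ xt]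
  rw [hw_eq]
  set ν : Measure (EuclideanSpace ℝ (Fin (n+1))) := (volume.restrict cube).withDensity
    (fun xt => ENNReal.ofReal (K' (dist xt x₀ / h)) * ENNReal.ofReal Z⁻¹) with hνdef
  have hwmeas : Measurable fun xt : EuclideanSpace ℝ (Fin (n+1)) =>
      ENNReal.ofReal (K' (dist xt x₀ / h)) * ENNReal.ofReal Z⁻¹ :=
    (hZmeas.ennreal_ofReal).mul_const _
  have hgoal_eq : (∫ xt, (∫ x, |f x₀ - f x| * K₀ (dist xt x / h) ∂μ) ∂ν)
      = (∫⁻ xt, inner' xt ∂ν).toReal := by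
    rw [show (fun xt => ∫ x, |f x₀ - f x| * K₀ (dist xt x / h) ∂μ)
        = fun xt => (inner' xt).toReal from funext h_inner_eq]
    rw [integral_eq_lintegral_of_nonneg_ae
      (Filter.Eventually.of_forall fun xt => ENNReal.toReal_nonneg)
      (hinner_meas.ennreal_toReal.aestronglyMeasurable)]
    congr 1
    exact lintegral_congr fun xt => ENNReal.ofReal_toReal (hfin xt)
  have hmono_cube : ∀ g : EuclideanSpace ℝ (Fin (n+1)) → ENNReal, Measurable g →
      (∫⁻ xt, g xt ∂ν) ≤ ENNReal.ofReal Z⁻¹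
        * ∫⁻ xt, ENNReal.ofReal (K' (dist xt x₀ / h)) * g xt := by
    intro g hg
    rw [hνdef, lintegral_withDensity_eq_lintegral_mul _ hwmeas hg]
    have hpt : ∀ xt, ((fun xt => ENNReal.ofReal (K' (dist xt x₀ / h)) * ENNReal.ofReal Z⁻¹) * g) xt
        = ENNReal.ofReal Z⁻¹ * (ENNReal.ofReal (K' (dist xt x₀ / h)) * g xt) := by
      intro xt
      simp only [Pi.mul_apply]
      ring
    rw [lintegral_congr hpt, lintegral_const_mul _ (show Measurable fun xt => ENNReal.ofReal (K' (dist xt x₀ / h)) * g xt from (hZmeas.ennreal_ofReal).mul hg)]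
    exact mul_le_mul_right (setLIntegral_le_lintegral _ _) _
  have hNν : ν univ ≤ ENNReal.ofReal Z⁻¹ * (ENNReal.ofReal (h ^ (n+1)) * A') := by
    calc ν univ = ∫⁻ _xt, (1:ENNReal) ∂ν := by rw [lintegral_one]
      _ ≤ ENNReal.ofReal Z⁻¹ * ∫⁻ xt, ENNReal.ofReal (K' (dist xt x₀ / h)) * 1 :=
          hmono_cube (fun _ => 1) measurable_const
      _ = ENNReal.ofReal Z⁻¹ * (ENNReal.ofReal (h ^ (n+1)) * A') := by
          rw [lintegral_congr (fun xt : EuclideanSpace ℝ (Fin (n+1)) => by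
            rw [mul_one, dist_comm xt x₀] :
              ∀ xt : EuclideanSpace ℝ (Fin (n+1)), ENNReal.ofReal (K' (dist xt x₀ / h)) * 1
                = ENNReal.ofReal (K' (dist x₀ xt / h))), hJ₀ x₀]
  have hDν : ∫⁻ xt, ENNReal.ofReal (dist x₀ xt) ∂ν
      ≤ ENNReal.ofReal Z⁻¹ * (ENNReal.ofReal (h ^ (n+1)) * (ENNReal.ofReal h * B')) := by
    calc ∫⁻ xt, ENNReal.ofReal (dist x₀ xt) ∂ν
        ≤ ENNReal.ofReal Z⁻¹ * ∫⁻ xt, ENNReal.ofReal (K' (dist xt x₀ / h))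
            * ENNReal.ofReal (dist x₀ xt) :=
          hmono_cube _ (measurable_const.dist measurable_id).ennreal_ofReal
      _ = ENNReal.ofReal Z⁻¹ * ∫⁻ xt, ENNReal.ofReal (dist x₀ xt * K' (dist x₀ xt / h)) := by
          congr 1
          refine lintegral_congr fun xt => ?_
          rw [dist_comm xt x₀, mul_comm, ← ENNReal.ofReal_mul dist_nonneg]
      _ = ENNReal.ofReal Z⁻¹ * (ENNReal.ofReal (h ^ (n+1)) * (ENNReal.ofReal h * B')) := by
          rw [hJ₁ x₀]
  -- combine
  have hWP : ENNReal.ofReal ((cz * h ^ (n+1))⁻¹) * ENNReal.ofReal (h ^ (n+1))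
      = ENNReal.ofReal cz⁻¹ := by
    rw [← ENNReal.ofReal_mul (by positivity)]
    congr 1
    field_simp
  have hZW : ENNReal.ofReal Z⁻¹ ≤ ENNReal.ofReal ((cz * h ^ (n+1))⁻¹) :=
    ENNReal.ofReal_le_ofReal (inv_anti₀ (by positivity) hZlb)
  have hTbound : (∫⁻ xt, inner' xt ∂ν)
      ≤ M * ENNReal.ofReal (h ^ (n+1)) * ENNReal.ofReal h := by
    have hmeasD : Measurable fun xt : EuclideanSpace ℝ (Fin (n+1)) =>
        ENNReal.ofReal (dist x₀ xt) := (measurable_const.dist measurable_id).ennreal_ofReal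
    calc ∫⁻ xt, inner' xt ∂ν
        ≤ ∫⁻ xt, (ENNReal.ofReal Lf * (ENNReal.ofReal (dist x₀ xt)
            * (ENNReal.ofReal L₁' * (ENNReal.ofReal (h ^ (n+1)) * A'))
          + ENNReal.ofReal L₁' * (ENNReal.ofReal (h ^ (n+1)) * (ENNReal.ofReal h * B')))) ∂ν :=
          lintegral_mono hinner_bd
      _ = ENNReal.ofReal Lf * ((∫⁻ xt, ENNReal.ofReal (dist x₀ xt) ∂ν)
            * (ENNReal.ofReal L₁' * (ENNReal.ofReal (h ^ (n+1)) * A'))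
          + (ENNReal.ofReal L₁' * (ENNReal.ofReal (h ^ (n+1)) * (ENNReal.ofReal h * B')))
            * ν univ) := by
          rw [lintegral_const_mul _ (show Measurable fun xt => ENNReal.ofReal (dist x₀ xt) * (ENNReal.ofReal L₁' * (ENNReal.ofReal (h ^ (n+1)) * A')) + ENNReal.ofReal L₁' * (ENNReal.ofReal (h ^ (n+1)) * (ENNReal.ofReal h * B')) from (hmeasD.mul_const _).add measurable_const),
            lintegral_add_right _ measurable_const, lintegral_mul_const _ hmeasD,
            lintegral_const]
      _ ≤ ENNReal.ofReal Lf
          * ((ENNReal.ofReal ((cz * h ^ (n+1))⁻¹)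
                * (ENNReal.ofReal (h ^ (n+1)) * (ENNReal.ofReal h * B')))
              * (ENNReal.ofReal L₁' * (ENNReal.ofReal (h ^ (n+1)) * A'))
            + (ENNReal.ofReal L₁' * (ENNReal.ofReal (h ^ (n+1)) * (ENNReal.ofReal h * B')))
              * (ENNReal.ofReal ((cz * h ^ (n+1))⁻¹)
                * (ENNReal.ofReal (h ^ (n+1)) * A'))) := by
          refine mul_le_mul_right (add_le_add ?_ ?_) _
          · exact mul_le_mul_left (le_trans hDν (mul_le_mul_left hZW _)) _
          · exact mul_le_mul_right (le_trans hNν (mul_le_mul_left hZW _)) _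
      _ = ENNReal.ofReal Lf * (2 * ((ENNReal.ofReal ((cz * h ^ (n+1))⁻¹)
            * ENNReal.ofReal (h ^ (n+1))) * ENNReal.ofReal (h ^ (n+1)) * ENNReal.ofReal h
            * ENNReal.ofReal L₁' * A' * B')) := by ring
      _ = M * ENNReal.ofReal (h ^ (n+1)) * ENNReal.ofReal h := by
          rw [hWP, hMdef]
          ring
  rw [hgoal_eq]
  calc (∫⁻ xt, inner' xt ∂ν).toReal
      ≤ (M * ENNReal.ofReal (h ^ (n+1)) * ENNReal.ofReal h).toReal :=
        ENNReal.toReal_mono (ENNReal.mul_ne_top (ENNReal.mul_ne_top hMfin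
          ENNReal.ofReal_ne_top) ENNReal.ofReal_ne_top) hTbound
    _ = M.toReal * h ^ (n + 1 + 1) := by
        rw [ENNReal.toReal_mul, ENNReal.toReal_mul, ENNReal.toReal_ofReal (by positivity),
          ENNReal.toReal_ofReal hh0.le]
        ring
end

section
/- Let F : 𝒯 → 𝒜 map indices to events and suppose the oracle test score S* is independent of the oracle threshold q*(Z) conditional on each event φ(t). Suppose the conditional CDF F_t* of S* given φ(t) is L_t-Lipschitz. Let (S, q) be the realized score and threshold, and suppose Pr(|S − S*| ∨ |q − q*(Z)| ≤ ε | φ(t)) ≥ 1 − δ(ε). Then |Pr(S ≤ q | φ(t)) − (1−α)| ≤ δ(ε) + 2L_t ε + L_t · E[|q*(Z) − Q(1−α; F_t*)| ∧ L_t^{-1} | φ(t)]. -/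
open MeasureTheory ProbabilityTheory
open Filter

/-- Abstract conditional-miscoverage decomposition: conditional on the event `A = φ(t)`,
if the oracle score `Sstar` is independent of the oracle threshold `qstar`, the oracle
conditional CDF `Ft` is `Lt`-Lipschitz, and the realized score/threshold pair `(S, q)`
approximates `(Sstar, qstar)` within `ε` with conditional probability at least `1 - δ`,
then the conditional coverage of `{S ≤ q}` deviates from `1 - α` by at most
`δ + 2 Lt ε + Lt E[|qstar - Q(1-α; Ft)| ∧ Lt⁻¹ | A]`. -/
theorem stmt_14 {Ω : Type*} [MeasurableSpace Ω] (P : Measure Ω) [IsProbabilityMeasure P]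
    (A : Set Ω) (hA_meas : MeasurableSet A) (hA_pos : P A ≠ 0)
    (Sstar qstar S q : Ω → ℝ)
    (hSstar_meas : Measurable Sstar) (hqstar_meas : Measurable qstar)
    (hS_meas : Measurable S) (hq_meas : Measurable q)
    (hindep : IndepFun Sstar qstar (P[|A]))
    (α : ℝ) (hα : α ∈ Set.Ioo (0:ℝ) 1)
    (Lt : ℝ) (hLt : 0 < Lt)
    (Ft : ℝ → ℝ) (hFt : ∀ u, Ft u = ((P[|A]) {ω | Sstar ω ≤ u}).toReal)
    (hFt_lip : ∀ u v, |Ft u - Ft v| ≤ Lt * |u - v|)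
    (ε δ : ℝ) (hε : 0 ≤ ε) (hδ : 0 ≤ δ)
    (happrox : 1 - δ ≤ ((P[|A]) {ω | |S ω - Sstar ω| ⊔ |q ω - qstar ω| ≤ ε}).toReal) :
    |((P[|A]) {ω | S ω ≤ q ω}).toReal - (1 - α)| ≤
      δ + 2 * Lt * ε +
        Lt * ∫ ω, min |qstar ω - sInf {u | 1 - α ≤ Ft u}| Lt⁻¹ ∂(P[|A]) := by
  obtain ⟨hα0, hα1⟩ := hα
  set μ := P[|A] with hμdef
  haveI hμP : IsProbabilityMeasure μ := cond_isProbabilityMeasure hA_pos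
  set ν := μ.map Sstar with hνdef
  haveI hνP : IsProbabilityMeasure ν := Measure.isProbabilityMeasure_map hSstar_meas.aemeasurable
  have hFt_cdf : ∀ u, Ft u = cdf ν u := by
    intro u
    rw [hFt, cdf_eq_real, measureReal_def, hνdef, Measure.map_apply hSstar_meas measurableSet_Iic]
    rfl
  have hFt_mono : Monotone Ft := by
    intro u v huv
    rw [hFt_cdf, hFt_cdf]; exact monotone_cdf ν huv
  have hFt01 : ∀ u, Ft u ∈ Set.Icc (0:ℝ) 1 := fun u => by
    rw [hFt_cdf]; exact ⟨cdf_nonneg ν u, cdf_le_one ν u⟩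
  have hFt_cont : Continuous Ft := by
    have hlip : LipschitzWith (Real.toNNReal Lt) Ft := by
      apply LipschitzWith.of_dist_le_mul
      intro u v
      rw [Real.dist_eq, Real.dist_eq, Real.coe_toNNReal _ hLt.le]
      exact hFt_lip u v
    exact hlip.continuous
  set q0 := sInf {u | 1 - α ≤ Ft u} with hq0def
  -- properties of the quantile
  have hT_ne : {u | 1 - α ≤ Ft u}.Nonempty := by
    have h : ∀ᶠ u in atTop, 1 - α < cdf ν u :=
      (tendsto_cdf_atTop ν).eventually (eventually_gt_nhds (by linarith))
    obtain ⟨u, hu⟩ := h.exists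
    exact ⟨u, by rw [Set.mem_setOf_eq, hFt_cdf]; exact hu.le⟩
  have hbot : ∃ b : ℝ, ∀ u ≤ b, Ft u < 1 - α := by
    have h : ∀ᶠ u in atBot, cdf ν u < 1 - α :=
      (tendsto_cdf_atBot ν).eventually (eventually_lt_nhds (by linarith))
    obtain ⟨b, hb⟩ := eventually_atBot.mp h
    exact ⟨b, fun u hu => by rw [hFt_cdf]; exact hb u hu⟩
  obtain ⟨b0, hb0⟩ := hbot
  have hT_bdd : BddBelow {u | 1 - α ≤ Ft u} := by
    refine ⟨b0, fun u hu => ?_⟩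
    by_contra h
    have := hb0 u (le_of_not_ge h)
    have hu' : 1 - α ≤ Ft u := hu
    linarith
  have hT_closed : IsClosed {u | 1 - α ≤ Ft u} :=
    isClosed_Ici.preimage hFt_cont
  have hq0_mem : q0 ∈ {u | 1 - α ≤ Ft u} :=
    hT_closed.csInf_mem hT_ne hT_bdd
  have hFtq0 : Ft q0 = 1 - α := by
    obtain ⟨v, hv⟩ := hT_ne
    have hv' : 1 - α ≤ Ft v := hv
    have hb0v : b0 ≤ v := by
      by_contra h
      exact absurd hv' (not_le.mpr (hb0 v (le_of_not_ge h)))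
    have hIVT : (1 - α) ∈ Ft '' Set.Icc b0 v := by
      apply intermediate_value_Icc hb0v hFt_cont.continuousOn
      exact ⟨(hb0 b0 le_rfl).le, hv'⟩
    obtain ⟨u0, _, hu0⟩ := hIVT
    have hle : q0 ≤ u0 := csInf_le hT_bdd (by rw [Set.mem_setOf_eq, hu0])
    have h1 : 1 - α ≤ Ft q0 := hq0_mem
    have h2 : Ft q0 ≤ Ft u0 := hFt_mono hle
    rw [hu0] at h2
    linarith
  -- pointwise bound
  have hpt : ∀ (c x : ℝ), |Ft (x + c) - (1 - α)| ≤ Lt * |c| + Lt * min |x - q0| Lt⁻¹ := by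
    intro c x
    rw [← hFtq0]
    rcases le_total |x - q0| Lt⁻¹ with h | h
    · rw [min_eq_left h]
      calc |Ft (x + c) - Ft q0| ≤ Lt * |x + c - q0| := hFt_lip _ _
        _ ≤ Lt * (|c| + |x - q0|) := by
            apply mul_le_mul_of_nonneg_left _ hLt.le
            calc |x + c - q0| = |c + (x - q0)| := by ring_nf
              _ ≤ |c| + |x - q0| := abs_add_le _ _
        _ = Lt * |c| + Lt * |x - q0| := by ring
    · rw [min_eq_right h]
      have h1 : |Ft (x + c) - Ft q0| ≤ 1 := by
        have ha := hFt01 (x + c)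
        have hb := hFt01 q0
        rw [abs_le]
        constructor <;> [linarith [ha.1, hb.2]; linarith [ha.2, hb.1]]
      have h2 : Lt * Lt⁻¹ = 1 := mul_inv_cancel₀ hLt.ne'
      nlinarith [abs_nonneg c, hLt.le]
  -- integrability of shifted cdf
  have hintFt : ∀ c : ℝ, Integrable (fun ω => Ft (qstar ω + c)) μ := by
    intro c
    refine Integrable.mono' (integrable_const 1)
      ((hFt_cont.measurable.comp (hqstar_meas.add_const c)).aestronglyMeasurable) ?_
    filter_upwards with ω
    rw [Real.norm_eq_abs, abs_le]
    exact ⟨by linarith [(hFt01 (qstar ω + c)).1], (hFt01 (qstar ω + c)).2⟩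
  -- Fubini step
  have hkey : ∀ c : ℝ,
      (μ {ω | Sstar ω ≤ qstar ω + c}).toReal = ∫ ω, Ft (qstar ω + c) ∂μ := by
    intro c
    have hmap : μ.map (fun ω => (Sstar ω, qstar ω)) = ν.prod (μ.map qstar) :=
      (indepFun_iff_map_prod_eq_prod_map_map hSstar_meas.aemeasurable
        hqstar_meas.aemeasurable).mp hindep
    have hsetm : MeasurableSet {p : ℝ × ℝ | p.1 ≤ p.2 + c} :=
      measurableSet_le measurable_fst (measurable_snd.add_const c)
    have h1 : μ {ω | Sstar ω ≤ qstar ω + c}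
        = ∫⁻ y, ν (Set.Iic (y + c)) ∂(μ.map qstar) := by
      have hpre : {ω | Sstar ω ≤ qstar ω + c}
          = (fun ω => (Sstar ω, qstar ω)) ⁻¹' {p : ℝ × ℝ | p.1 ≤ p.2 + c} := rfl
      rw [hpre, ← Measure.map_apply (hSstar_meas.prodMk hqstar_meas) hsetm, hmap,
        Measure.prod_apply_symm hsetm]
      rfl
    have h2 : ∀ y : ℝ, ν (Set.Iic (y + c)) = ENNReal.ofReal (Ft (y + c)) := fun y => by
      rw [hFt_cdf, ofReal_cdf]
    have h3 : μ {ω | Sstar ω ≤ qstar ω + c}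
        = ∫⁻ ω, ENNReal.ofReal (Ft (qstar ω + c)) ∂μ := by
      rw [h1]
      simp_rw [h2]
      rw [lintegral_map (f := fun y => ENNReal.ofReal (Ft (y + c)))
        ((hFt_cont.measurable.comp (measurable_add_const c)).ennreal_ofReal) hqstar_meas]
    rw [h3, ← ofReal_integral_eq_lintegral_ofReal (hintFt c)
      (Filter.Eventually.of_forall fun ω => (hFt01 (qstar ω + c)).1),
      ENNReal.toReal_ofReal]
    exact integral_nonneg fun ω => (hFt01 (qstar ω + c)).1
  -- the min integrand
  set g : Ω → ℝ := fun ω => min |qstar ω - q0| Lt⁻¹ with hgdef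
  have hg_nonneg : ∀ ω, 0 ≤ g ω := fun ω =>
    le_min (abs_nonneg _) (inv_nonneg.mpr hLt.le)
  have hg_meas : Measurable g := ((hqstar_meas.sub_const q0).abs.min measurable_const)
  have hg_int : Integrable g μ := by
    refine Integrable.mono' (integrable_const Lt⁻¹) hg_meas.aestronglyMeasurable ?_
    filter_upwards with ω
    rw [Real.norm_eq_abs, abs_of_nonneg (hg_nonneg ω)]
    exact min_le_right _ _
  have hI_nonneg : 0 ≤ ∫ ω, g ω ∂μ := integral_nonneg hg_nonneg
  -- integral bound
  have hint_bound : ∀ c : ℝ,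
      |∫ ω, Ft (qstar ω + c) ∂μ - (1 - α)| ≤ Lt * |c| + Lt * ∫ ω, g ω ∂μ := by
    intro c
    have h1 : ∫ ω, Ft (qstar ω + c) ∂μ - (1 - α)
        = ∫ ω, (Ft (qstar ω + c) - (1 - α)) ∂μ := by
      rw [integral_sub (hintFt c) (integrable_const _), integral_const, probReal_univ,
        one_smul]
    rw [h1]
    calc |∫ ω, (Ft (qstar ω + c) - (1 - α)) ∂μ|
        ≤ ∫ ω, |Ft (qstar ω + c) - (1 - α)| ∂μ := by
          simpa [Real.norm_eq_abs] using
            norm_integral_le_integral_norm (fun ω => Ft (qstar ω + c) - (1 - α)) (μ := μ)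
      _ ≤ ∫ ω, (Lt * |c| + Lt * g ω) ∂μ := by
          refine integral_mono ((hintFt c).sub (integrable_const _)).abs
            ((integrable_const _).add (hg_int.const_mul Lt)) fun ω => hpt c (qstar ω)
      _ = Lt * |c| + Lt * ∫ ω, g ω ∂μ := by
          rw [integral_add (integrable_const _) (hg_int.const_mul Lt), integral_const,
            probReal_univ, one_smul, integral_const_mul]
  -- event arithmetic
  set E := {ω | |S ω - Sstar ω| ⊔ |q ω - qstar ω| ≤ ε} with hEdef
  have hE_meas : MeasurableSet E :=
    measurableSet_le (((hS_meas.sub hSstar_meas).abs).max ((hq_meas.sub hqstar_meas).abs))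
      measurable_const
  have hEc : (μ Eᶜ).toReal ≤ δ := by
    have hsum : (μ E).toReal + (μ Eᶜ).toReal = 1 := by
      rw [← ENNReal.toReal_add (measure_ne_top _ _) (measure_ne_top _ _),
        measure_add_measure_compl hE_meas, measure_univ, ENNReal.toReal_one]
    have hE' : 1 - δ ≤ (μ E).toReal := happrox
    linarith
  have htoReal_mono : ∀ s t : Set Ω, s ⊆ t → (μ s).toReal ≤ (μ t).toReal :=
    fun s t h => ENNReal.toReal_mono (measure_ne_top _ _) (measure_mono h)
  have hsplit : ∀ s t : Set Ω, (μ (s ∪ t)).toReal ≤ (μ s).toReal + (μ t).toReal := by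
    intro s t
    rw [← ENNReal.toReal_add (measure_ne_top _ _) (measure_ne_top _ _)]
    exact ENNReal.toReal_mono (by finiteness) (measure_union_le s t)
  have hup : (μ {ω | S ω ≤ q ω}).toReal
      ≤ (μ {ω | Sstar ω ≤ qstar ω + 2 * ε}).toReal + δ := by
    have hsub : {ω | S ω ≤ q ω} ⊆ {ω | Sstar ω ≤ qstar ω + 2 * ε} ∪ Eᶜ := by
      intro ω hω
      by_cases hEω : ω ∈ E
      · left
        have hE1 : |S ω - Sstar ω| ≤ ε := le_trans (le_max_left _ _) hEω
        have hE2 : |q ω - qstar ω| ≤ ε := le_trans (le_max_right _ _) hEω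
        have h1 := abs_le.mp hE1
        have h2 := abs_le.mp hE2
        have hω' : S ω ≤ q ω := hω
        simp only [Set.mem_setOf_eq]
        linarith [h1.1, h2.1]
      · exact Or.inr hEω
    calc (μ {ω | S ω ≤ q ω}).toReal
        ≤ (μ ({ω | Sstar ω ≤ qstar ω + 2 * ε} ∪ Eᶜ)).toReal := htoReal_mono _ _ hsub
      _ ≤ (μ {ω | Sstar ω ≤ qstar ω + 2 * ε}).toReal + (μ Eᶜ).toReal := hsplit _ _
      _ ≤ _ := by linarith
  have hlo : (μ {ω | Sstar ω ≤ qstar ω + -(2 * ε)}).toReal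
      ≤ (μ {ω | S ω ≤ q ω}).toReal + δ := by
    have hsub : {ω | Sstar ω ≤ qstar ω + -(2 * ε)} ⊆ {ω | S ω ≤ q ω} ∪ Eᶜ := by
      intro ω hω
      by_cases hEω : ω ∈ E
      · left
        have hE1 : |S ω - Sstar ω| ≤ ε := le_trans (le_max_left _ _) hEω
        have hE2 : |q ω - qstar ω| ≤ ε := le_trans (le_max_right _ _) hEω
        have h1 := abs_le.mp hE1
        have h2 := abs_le.mp hE2
        have hω' : Sstar ω ≤ qstar ω + -(2 * ε) := hω
        simp only [Set.mem_setOf_eq]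
        linarith [h1.2, h2.1]
      · exact Or.inr hEω
    calc (μ {ω | Sstar ω ≤ qstar ω + -(2 * ε)}).toReal
        ≤ (μ ({ω | S ω ≤ q ω} ∪ Eᶜ)).toReal := htoReal_mono _ _ hsub
      _ ≤ (μ {ω | S ω ≤ q ω}).toReal + (μ Eᶜ).toReal := hsplit _ _
      _ ≤ _ := by linarith
  -- combine
  have habs2ε : |(2 : ℝ) * ε| = 2 * ε := abs_of_nonneg (by linarith)
  have habs2ε' : |-((2 : ℝ) * ε)| = 2 * ε := by rw [abs_neg, habs2ε]
  have ha := hint_bound (2 * ε)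
  have hb := hint_bound (-(2 * ε))
  rw [habs2ε] at ha
  rw [habs2ε'] at hb
  rw [hkey (2 * ε)] at hup
  rw [hkey (-(2 * ε))] at hlo
  have ha' := abs_le.mp ha
  have hb' := abs_le.mp hb
  rw [abs_le]
  constructor
  · linarith [hb'.1, hlo]
  · linarith [ha'.2, hup]
end

section
/- Let w(x) = K(x, X̃; h)/K_X(X̃) where K_X(x) = E[K(x, X; h)] for X ~ P_X, and where, conditional on X_{n+1} ~ P_X, the auxiliary variable X̃ is drawn with density proportional to K(·, X_{n+1}; h). Assume K(x₁,x₂;h) = K(x₂,x₁;h) is symmetric and K₀ := ∫ K(x̃, x; h) dx̃ is a finite constant independent of x. Then for every fixed x in the support, E[w(x)] = 1, where the expectation is over (X_{n+1}, X̃). -/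
open MeasureTheory

/-- RLCP marginal-validity identity: with `X̃` drawn (given `X_{n+1} ~ f_X`) with
density `K(·, X_{n+1})/c`, the normalized randomized-localization weight
`w(x) = K(x, X̃)/K_X(X̃)` satisfies `E[w(x)] = 1` for every fixed `x` in the support. -/
theorem stmt_16 {𝒳 : Type*} [MeasurableSpace 𝒳] (lam : Measure 𝒳) [SigmaFinite lam]
    (fX : 𝒳 → ℝ) (hfX_meas : Measurable fX) (hfX_nonneg : ∀ x, 0 ≤ fX x)
    (hfX_prob : ∫ x, fX x ∂lam = 1)
    (K : 𝒳 → 𝒳 → ℝ) (hK_meas : Measurable (Function.uncurry K))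
    (hK_nonneg : ∀ x y, 0 ≤ K x y) (hK_symm : ∀ x y, K x y = K y x)
    (c : ℝ) (hc_pos : 0 < c) (hc : ∀ x, ∫ xt, K xt x ∂lam = c)
    (KX : 𝒳 → ℝ) (hKX : ∀ x, KX x = ∫ y, K x y * fX y ∂lam)
    (hKX_pos : ∀ x, 0 < KX x)
    (x : 𝒳) (hx : 0 < fX x)
    (hint : Integrable (fun p : 𝒳 × 𝒳 =>
      (K x p.2 / KX p.2) * (K p.2 p.1 / c) * fX p.1) (lam.prod lam)) :
    ∫ x₁, ∫ xt, (K x xt / KX xt) * (K xt x₁ / c) * fX x₁ ∂lam ∂lam = 1 := by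
  rw [MeasureTheory.integral_integral_swap hint]
  have h1 : ∀ xt, ∫ x₁, (K x xt / KX xt) * (K xt x₁ / c) * fX x₁ ∂lam = K x xt / c := by
    intro xt
    have he : (fun x₁ => (K x xt / KX xt) * (K xt x₁ / c) * fX x₁)
        = fun x₁ => (K x xt / (KX xt * c)) * (K xt x₁ * fX x₁) := by
      funext x₁
      field_simp
    rw [he, MeasureTheory.integral_const_mul, ← hKX xt]
    have hne := (hKX_pos xt).ne'
    field_simp
  simp only [h1]
  simp_rw [div_eq_mul_inv, MeasureTheory.integral_mul_const]
  have hcx : ∫ xt, K x xt ∂lam = c := by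
    simp_rw [hK_symm x]
    exact hc x
  rw [hcx, mul_inv_cancel₀ hc_pos.ne']
end

section
/- Let f_{X,1}, f_{X,2} be densities on 𝒳 with ratio r_X = f_{X,2}/f_{X,1}, and let k : 𝒳 × 𝒳 → ℝ₊ satisfy k_𝒳(x₂) = ∫ k(x₁,x₂) dx₁ < ∞ for all x₂. Given X_{n+1} ~ f_{X,2}, draw X̃ with density k(·, X_{n+1})/k_𝒳(X_{n+1}). Define b(x̃) = ∫ f_{X,2}(u) k(x̃,u)/k_𝒳(u) du and the weight w(x) = r_X(x) k(X̃, x)/k_𝒳(x). Then for every fixed x, E[w(x)/b(X̃)] = r_X(x). -/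
open MeasureTheory

/-- GRLCP marginal-validity identity under covariate shift: with calibration density
`f₁`, test density `f₂ = r · f₁`, localization function `k` with column integrals
`kC x₂ = ∫ k(x₁, x₂) dλ(x₁)`, auxiliary draw `X̃ | X_{n+1}` with density
`k(·, X_{n+1})/kC(X_{n+1})`, normalizer `b(x̃) = ∫ f₂(u) k(x̃,u)/kC(u) du`, and weight
`w(x) = r(x) k(X̃, x)/kC(x)`, one has `E[w(x)/b(X̃)] = r(x)` for every fixed `x`. -/
theorem stmt_17 {𝒳 : Type*} [MeasurableSpace 𝒳] (lam : Measure 𝒳) [SigmaFinite lam]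
    (f₁ f₂ r : 𝒳 → ℝ)
    (hf₁_meas : Measurable f₁) (hf₂_meas : Measurable f₂)
    (hf₁_nonneg : ∀ x, 0 ≤ f₁ x) (hf₂_nonneg : ∀ x, 0 ≤ f₂ x)
    (hf₁_prob : ∫ x, f₁ x ∂lam = 1) (hf₂_prob : ∫ x, f₂ x ∂lam = 1)
    (hr : ∀ x, f₂ x = r x * f₁ x)
    (k : 𝒳 → 𝒳 → ℝ) (hk_meas : Measurable (Function.uncurry k))
    (hk_nonneg : ∀ x y, 0 ≤ k x y)
    (kC : 𝒳 → ℝ) (hkC : ∀ x₂, kC x₂ = ∫ x₁, k x₁ x₂ ∂lam) (hkC_pos : ∀ x₂, 0 < kC x₂)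
    (b : 𝒳 → ℝ) (hb : ∀ xt, b xt = ∫ u, f₂ u * k xt u / kC u ∂lam) (hb_pos : ∀ xt, 0 < b xt)
    (x : 𝒳)
    (hint : Integrable (fun p : 𝒳 × 𝒳 =>
      (r x * k p.2 x / kC x / b p.2) * (k p.2 p.1 / kC p.1) * f₂ p.1) (lam.prod lam)) :
    ∫ x₁, ∫ xt, (r x * k xt x / kC x / b xt) * (k xt x₁ / kC x₁) * f₂ x₁ ∂lam ∂lam
      = r x := by
  rw [MeasureTheory.integral_integral_swap hint]
  have h1 : ∀ xt, ∫ x₁, (r x * k xt x / kC x / b xt) * (k xt x₁ / kC x₁) * f₂ x₁ ∂lam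
      = r x * k xt x / kC x := by
    intro xt
    have heq : (fun x₁ => (r x * k xt x / kC x / b xt) * (k xt x₁ / kC x₁) * f₂ x₁)
        = fun x₁ => (r x * k xt x / kC x / b xt) * (f₂ x₁ * k xt x₁ / kC x₁) := by
      funext x₁; ring
    rw [heq, MeasureTheory.integral_const_mul, ← hb xt]
    field_simp [(hb_pos xt).ne', (hkC_pos x).ne']
  simp_rw [h1]
  have heq2 : (fun xt => r x * k xt x / kC x) = fun xt => (r x / kC x) * k xt x := by
    funext xt; ring
  rw [heq2, MeasureTheory.integral_const_mul, ← hkC x]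
  field_simp [(hkC_pos x).ne']
end
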